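/- arXiv:0808.1731 — 5 statements merged into one kernel-verified Lean document; each statement's English description precedes it below -/
import Mathlib

section
/- (Bounded Fuglede–Putnam, Rosenblum's proof ingredient) For bounded normal operators N₁ ∈ B(H₁), N₂ ∈ B(H₂) and V ∈ B(H₁,H₂) with V N₁ = N₂ V, one has exp(i ζ̄ N₂) V exp(-i ζ̄ N₁) = V for all ζ ∈ ℂ, after multiplying by exp(i ζ N₂*) and exp(-i ζ N₁*) the resulting entire bounded function is constant, yielding V N₁* = N₂* V. -/
open ContinuousLinearMap NormedSpace

section Aux

variable {H₁ H₂ : Type*} [NormedAddCommGroup H₁] [InnerProductSpace ℂ H₁] [CompleteSpace H₁]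
    [NormedAddCommGroup H₂] [InnerProductSpace ℂ H₂] [CompleteSpace H₂]

lemma fp_aux_pow (N₁ : H₁ →L[ℂ] H₁) (N₂ : H₂ →L[ℂ] H₂) (V : H₁ →L[ℂ] H₂)
    (hV : V ∘L N₁ = N₂ ∘L V) (n : ℕ) : V ∘L (N₁ ^ n) = (N₂ ^ n) ∘L V := by
  induction n with
  | zero => simp [ContinuousLinearMap.one_def]
  | succ n ih =>
    rw [pow_succ, pow_succ, mul_def, mul_def, ← comp_assoc, ih, comp_assoc, hV, ← comp_assoc]

lemma fp_aux_exp (N₁ : H₁ →L[ℂ] H₁) (N₂ : H₂ →L[ℂ] H₂) (V : H₁ →L[ℂ] H₂)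
    (hV : V ∘L N₁ = N₂ ∘L V) (a : ℂ) :
    V ∘L exp (a • N₁) = exp (a • N₂) ∘L V := by
  have h1 : V ∘L exp (a • N₁) = (compL ℂ H₁ H₁ H₂ V) (exp (a • N₁)) := rfl
  have h2 : exp (a • N₂) ∘L V = ((compL ℂ H₁ H₂ H₂).flip V) (exp (a • N₂)) := rfl
  rw [h1, h2, exp_eq_tsum ℂ, exp_eq_tsum ℂ,
    (compL ℂ H₁ H₁ H₂ V).map_tsum (expSeries_summable' (𝕂 := ℂ) (a • N₁)),
    ((compL ℂ H₁ H₂ H₂).flip V).map_tsum (expSeries_summable' (𝕂 := ℂ) (a • N₂))]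
  refine tsum_congr fun n => ?_
  simp only [map_smul]
  congr 1
  show V ∘L ((a • N₁) ^ n) = ((a • N₂) ^ n) ∘L V
  rw [smul_pow, smul_pow, comp_smul, smul_comp, fp_aux_pow N₁ N₂ V hV n]

lemma fp_exp_mul_exp_neg {𝔸 : Type*} [NormedRing 𝔸] [NormedAlgebra ℂ 𝔸] [CompleteSpace 𝔸]
    (x : 𝔸) : exp x * exp (-x) = 1 := by
  let +nondep : NormedAlgebra ℚ 𝔸 := .restrictScalars ℚ ℂ 𝔸
  rw [← exp_add_of_commute (Commute.refl x).neg_right, add_neg_cancel, exp_zero]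

lemma fp_exp_neg_mul_exp {𝔸 : Type*} [NormedRing 𝔸] [NormedAlgebra ℂ 𝔸] [CompleteSpace 𝔸]
    (x : 𝔸) : exp (-x) * exp x = 1 := by
  let +nondep : NormedAlgebra ℚ 𝔸 := .restrictScalars ℚ ℂ 𝔸
  rw [← exp_add_of_commute (Commute.refl x).neg_left, neg_add_cancel, exp_zero]

set_option maxHeartbeats 1000000 in
lemma fp_skew_norm {H : Type*} [NormedAddCommGroup H] [InnerProductSpace ℂ H] [CompleteSpace H]
    (S : H →L[ℂ] H) (hS : star S = -S) (x : H) : ‖exp S x‖ = ‖x‖ := by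
  let +nondep : NormedAlgebra ℚ (H →L[ℂ] H) := .restrictScalars ℚ ℂ (H →L[ℂ] H)
  have hm : exp S ∈ unitary (H →L[ℂ] H) :=
    exp_mem_unitary_of_mem_skewAdjoint (skewAdjoint.mem_iff.2 hS)
  exact norm_map_of_mem_unitary hm x

lemma fp_skew {H : Type*} [NormedAddCommGroup H] [InnerProductSpace ℂ H] [CompleteSpace H]
    (N : H →L[ℂ] H) (ζ : ℂ) :
    star (ζ • (Complex.I • adjoint N) + (Complex.I * (starRingEnd ℂ) ζ) • N)
      = -(ζ • (Complex.I • adjoint N) + (Complex.I * (starRingEnd ℂ) ζ) • N) := by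
  have h1 : star (ζ • (Complex.I • adjoint N)) = -((Complex.I * (starRingEnd ℂ) ζ) • N) := by
    rw [smul_smul, star_smul, star_eq_adjoint, adjoint_adjoint, ← neg_smul]
    congr 1
    simp [Complex.star_def, map_mul, Complex.conj_I]
    ring
  have h2 : star ((Complex.I * (starRingEnd ℂ) ζ) • N) = -(ζ • (Complex.I • adjoint N)) := by
    rw [star_smul, star_eq_adjoint, smul_smul, ← neg_smul]
    congr 1
    simp [Complex.star_def, map_mul, Complex.conj_I]
    ring
  rw [star_add, h1, h2]
  abel

end Aux

set_option maxHeartbeats 1000000 in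
/-- **bounded Fuglede–Putnam, Rosenblum's proof ingredient.** For bounded normal
operators `N₁ ∈ B(H₁)`, `N₂ ∈ B(H₂)` and `V ∈ B(H₁,H₂)` with `V N₁ = N₂ V`, one has
`exp(i ζ̄ N₂) V exp(-i ζ̄ N₁) = V` for all `ζ ∈ ℂ`, and (after multiplying by `exp(i ζ N₂*)`
and `exp(-i ζ N₁*)`, the resulting entire bounded function being constant by Liouville's
theorem) `V N₁* = N₂* V`. -/
theorem fuglede_putnam_bounded
    {H₁ H₂ : Type*} [NormedAddCommGroup H₁] [InnerProductSpace ℂ H₁] [CompleteSpace H₁]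
    [NormedAddCommGroup H₂] [InnerProductSpace ℂ H₂] [CompleteSpace H₂]
    (N₁ : H₁ →L[ℂ] H₁) (N₂ : H₂ →L[ℂ] H₂)
    (hN₁ : IsStarNormal N₁) (hN₂ : IsStarNormal N₂)
    (V : H₁ →L[ℂ] H₂) (hV : V ∘L N₁ = N₂ ∘L V) :
    (∀ ζ : ℂ,
      NormedSpace.exp ((Complex.I * (starRingEnd ℂ) ζ) • N₂) ∘L V ∘L
        NormedSpace.exp ((-(Complex.I * (starRingEnd ℂ) ζ)) • N₁) = V) ∧
    V ∘L adjoint N₁ = adjoint N₂ ∘L V := by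
  have key := fp_aux_exp N₁ N₂ V hV
  have part1 : ∀ ζ : ℂ,
      exp ((Complex.I * (starRingEnd ℂ) ζ) • N₂) ∘L V ∘L
        exp ((-(Complex.I * (starRingEnd ℂ) ζ)) • N₁) = V := by
    intro ζ
    set w := Complex.I * (starRingEnd ℂ) ζ with hw
    rw [key (-w), ← comp_assoc, ← mul_def, neg_smul, fp_exp_mul_exp_neg (w • N₂)]
    simp [ContinuousLinearMap.one_def]
  refine ⟨part1, ?_⟩
  -- Liouville argument
  set A₁ : H₁ →L[ℂ] H₁ := Complex.I • adjoint N₁ with hA₁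
  set A₂ : H₂ →L[ℂ] H₂ := Complex.I • adjoint N₂ with hA₂
  set g : ℂ → (H₁ →L[ℂ] H₂) := fun ζ => exp (ζ • A₂) ∘L V ∘L exp (ζ • (-A₁)) with hg
  have d2 : Differentiable ℂ (fun ζ : ℂ => exp (ζ • A₂)) :=
    fun t => (hasDerivAt_exp_smul_const A₂ t).differentiableAt
  have d1 : Differentiable ℂ (fun ζ : ℂ => exp (ζ • (-A₁))) :=
    fun t => (hasDerivAt_exp_smul_const (-A₁) t).differentiableAt
  have dg : Differentiable ℂ g :=
    d2.clm_comp ((differentiable_const V).clm_comp d1)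
  -- commutation facts
  have hc₂ : Commute (adjoint N₂) N₂ := by
    have := hN₂.star_comm_self
    rwa [star_eq_adjoint] at this
  have hc₁ : Commute (adjoint N₁) N₁ := by
    have := hN₁.star_comm_self
    rwa [star_eq_adjoint] at this
  -- boundedness
  have hb : ∀ ζ : ℂ, ‖g ζ‖ ≤ ‖V‖ := by
    intro ζ
    set w := Complex.I * (starRingEnd ℂ) ζ with hw
    set S₂ : H₂ →L[ℂ] H₂ := ζ • A₂ + w • N₂ with hS₂
    set S₁ : H₁ →L[ℂ] H₁ := ζ • A₁ + w • N₁ with hS₁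
    have hskew₂ : star S₂ = -S₂ := fp_skew N₂ ζ
    have hskew₁ : star S₁ = -S₁ := fp_skew N₁ ζ
    have hcomm₂ : Commute (ζ • A₂) (w • N₂) :=
      ((hc₂.smul_left Complex.I).smul_left ζ).smul_right w
    have hcomm₁ : Commute ((-w) • N₁) (ζ • (-A₁)) := by
      have : Commute N₁ (-A₁) := (((hc₁.symm).smul_right Complex.I).neg_right)
      exact (this.smul_left (-w)).smul_right ζ
    have hgζ : g ζ = exp S₂ ∘L V ∘L exp (-S₁) := by
      let +nondep : NormedAlgebra ℚ (H₁ →L[ℂ] H₁) := .restrictScalars ℚ ℂ (H₁ →L[ℂ] H₁)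
      let +nondep : NormedAlgebra ℚ (H₂ →L[ℂ] H₂) := .restrictScalars ℚ ℂ (H₂ →L[ℂ] H₂)
      have e2 : exp (ζ • A₂) ∘L exp (w • N₂) = exp S₂ := by
        rw [← mul_def, ← exp_add_of_commute hcomm₂, hS₂]
      have e1 : exp ((-w) • N₁) ∘L exp (ζ • (-A₁)) = exp (-S₁) := by
        rw [← mul_def, ← exp_add_of_commute hcomm₁, hS₁]
        congr 1
        rw [neg_add, neg_smul, smul_neg]
        exact add_comm _ _
      calc g ζ = exp (ζ • A₂) ∘L (exp (w • N₂) ∘L V ∘L exp ((-w) • N₁)) ∘L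
            exp (ζ • (-A₁)) := by
            rw [hg]
            dsimp only
            rw [part1 ζ]
        _ = (exp (ζ • A₂) ∘L exp (w • N₂)) ∘L V ∘L
            (exp ((-w) • N₁) ∘L exp (ζ • (-A₁))) := by
            simp only [comp_assoc]
        _ = exp S₂ ∘L V ∘L exp (-S₁) := by rw [e2, e1]
    rw [hgζ]
    refine opNorm_le_bound _ (norm_nonneg V) fun x => ?_
    have hns₁ : star (-S₁) = -(-S₁) := by rw [star_neg, hskew₁]
    calc ‖(exp S₂ ∘L V ∘L exp (-S₁)) x‖
        = ‖(V ∘L exp (-S₁)) x‖ := fp_skew_norm S₂ hskew₂ _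
      _ = ‖V (exp (-S₁) x)‖ := rfl
      _ ≤ ‖V‖ * ‖exp (-S₁) x‖ := V.le_opNorm _
      _ = ‖V‖ * ‖x‖ := by rw [fp_skew_norm (-S₁) hns₁ x]
  have hbdd : Bornology.IsBounded (Set.range g) :=
    isBounded_iff_forall_norm_le.2 ⟨‖V‖, by rintro T ⟨ζ, rfl⟩; exact hb ζ⟩
  have hconst : ∀ ζ : ℂ, g ζ = g 0 := fun ζ => dg.apply_eq_apply_of_bounded hbdd ζ 0
  have hg0 : g 0 = V := by
    simp [hg, zero_smul, exp_zero, ContinuousLinearMap.one_def]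
  have hcomm2 : ∀ ζ : ℂ, exp (ζ • A₂) ∘L V = V ∘L exp (ζ • A₁) := by
    intro ζ
    have h := (hconst ζ).trans hg0
    rw [hg] at h
    dsimp only at h
    have := congrArg (fun T => T ∘L exp (ζ • A₁)) h
    rw [comp_assoc, comp_assoc, smul_neg] at this
    rw [← mul_def (exp (-(ζ • A₁))), fp_exp_neg_mul_exp (ζ • A₁)] at this
    simpa [ContinuousLinearMap.one_def] using this
  -- differentiate at 0
  have hd2 : HasDerivAt (fun ζ : ℂ => exp (ζ • A₂) ∘L V) (A₂ ∘L V) 0 := by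
    have h := (hasDerivAt_exp_smul_const (𝕂 := ℂ) A₂ 0).clm_comp
      (hasDerivAt_const (0 : ℂ) V)
    simpa [zero_smul, exp_zero, ContinuousLinearMap.one_def, mul_def, id_comp] using h
  have hd1 : HasDerivAt (fun ζ : ℂ => V ∘L exp (ζ • A₁)) (V ∘L A₁) 0 := by
    have h := (hasDerivAt_const (0 : ℂ) V).clm_comp
      (hasDerivAt_exp_smul_const (𝕂 := ℂ) A₁ 0)
    simpa [zero_smul, exp_zero, ContinuousLinearMap.one_def, mul_def, id_comp] using h
  have heq : (fun ζ : ℂ => exp (ζ • A₂) ∘L V) = fun ζ : ℂ => V ∘L exp (ζ • A₁) :=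
    funext hcomm2
  rw [heq] at hd2
  have hAV : V ∘L A₁ = A₂ ∘L V := hd1.unique hd2
  rw [hA₁, hA₂, comp_smul, smul_comp] at hAV
  exact smul_right_injective (H₁ →L[ℂ] H₂) Complex.I_ne_zero hAV
end

section
/- Let A ≥ 0 be self-adjoint and B densely defined closed in H with dom(B) ⊇ dom(A), so that ‖Bf‖ ≤ a‖Af‖ + b‖f‖ for all f ∈ dom(A) for some a, b ≥ 0. Then dom(|B|^{1/2}) ⊇ dom(A^{1/2}) and ‖|B|^{1/2}(A + I)^{-1/2}‖ ≤ (a + b)^{1/2}. -/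
set_option maxHeartbeats 1000000

open Complex Filter

section AuxLemmas

variable {H : Type*} [NormedAddCommGroup H] [InnerProductSpace ℂ H] [CompleteSpace H]

/-- Symmetry of a self-adjoint partially defined operator. -/
lemma pmap_symm {S : H →ₗ.[ℂ] H} (hS : IsSelfAdjoint S) {x y : H}
    (hx : x ∈ S.domain) (hy : y ∈ S.domain) :
    (inner ℂ (S ⟨x, hx⟩ : H) y : ℂ) = inner ℂ x (S ⟨y, hy⟩ : H) := by
  have hd : Dense (S.domain : Set H) := hS.dense_domain
  have heq : S.adjoint = S := LinearPMap.isSelfAdjoint_def.mp hS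
  obtain ⟨hdom, hfun⟩ := LinearPMap.ext_iff.mp heq
  have hx' : x ∈ S.adjoint.domain := hdom.symm ▸ hx
  have h2 : S.adjoint ⟨x, hx'⟩ = S ⟨x, hx⟩ := hfun (x := x) (hf := hx') (hg := hx)
  rw [← h2]
  exact LinearPMap.adjoint_isFormalAdjoint hd ⟨x, hx'⟩ ⟨y, hy⟩

lemma pmap_sub_val (S : H →ₗ.[ℂ] H) {x y : H} (hx : x ∈ S.domain) (hy : y ∈ S.domain)
    (hxy : x - y ∈ S.domain) :
    S ⟨x - y, hxy⟩ = S ⟨x, hx⟩ - S ⟨y, hy⟩ := by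
  have : (⟨x - y, hxy⟩ : S.domain) = ⟨x, hx⟩ - ⟨y, hy⟩ := by
    apply Subtype.ext; rfl
  rw [this, LinearPMap.map_sub]

lemma pmap_add_val (S : H →ₗ.[ℂ] H) {x y : H} (hx : x ∈ S.domain) (hy : y ∈ S.domain)
    (hxy : x + y ∈ S.domain) :
    S ⟨x + y, hxy⟩ = S ⟨x, hx⟩ + S ⟨y, hy⟩ := by
  have : (⟨x + y, hxy⟩ : S.domain) = ⟨x, hx⟩ + ⟨y, hy⟩ := by
    apply Subtype.ext; rfl
  rw [this, LinearPMap.map_add]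

/-- Graph-limit property of a self-adjoint operator. -/
lemma pmap_closed_limit {S : H →ₗ.[ℂ] H} (hS : IsSelfAdjoint S) {x y : H}
    {u : ℕ → H} (hu : ∀ n, u n ∈ S.domain)
    (hux : Tendsto u atTop (nhds x))
    (huy : Tendsto (fun n => (S ⟨u n, hu n⟩ : H)) atTop (nhds y)) :
    ∃ hx : x ∈ S.domain, S ⟨x, hx⟩ = y := by
  have hd : Dense (S.domain : Set H) := hS.dense_domain
  have heq : S.adjoint = S := LinearPMap.isSelfAdjoint_def.mp hS
  have key : ∀ v : S.domain, (inner ℂ y (v : H) : ℂ) = inner ℂ x (S v : H) := by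
    intro v
    have h1 : Tendsto (fun n => (inner ℂ (S ⟨u n, hu n⟩ : H) (v : H) : ℂ)) atTop
        (nhds (inner ℂ y (v : H))) := huy.inner tendsto_const_nhds
    have h2 : ∀ n, (inner ℂ (S ⟨u n, hu n⟩ : H) (v : H) : ℂ) = inner ℂ (u n) (S v : H) := by
      intro n
      exact pmap_symm hS (hu n) v.2
    rw [funext h2] at h1
    have h3 : Tendsto (fun n => (inner ℂ (u n) (S v : H) : ℂ)) atTop
        (nhds (inner ℂ x (S v : H))) := hux.inner tendsto_const_nhds
    exact tendsto_nhds_unique h1 h3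
  have hxdom : x ∈ S.domain := by
    have : x ∈ S.adjoint.domain :=
      LinearPMap.mem_adjoint_domain_of_exists x ⟨y, fun v => key v⟩
    rwa [heq] at this
  refine ⟨hxdom, ?_⟩
  apply hd.eq_of_inner_left (𝕜 := ℂ)
  intro v' hv'
  let v : S.domain := ⟨v', hv'⟩
  calc (inner ℂ (S ⟨x, hxdom⟩ : H) (v : H) : ℂ) = inner ℂ x (S v : H) := pmap_symm hS hxdom v.2
    _ = inner ℂ y (v : H) := (key v).symm

/-- Log-convexity chain bound for nonnegative real sequences. -/
lemma aux_gamma (γ : ℕ → ℝ) (c K : ℝ) (hc : 0 ≤ c)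
    (hnn : ∀ n, 0 ≤ γ n) (hconv : ∀ n, γ (n + 1) ^ 2 ≤ γ n * γ (n + 2))
    (hbd : ∀ n, γ n ≤ K * c ^ n) : γ 1 ≤ c * γ 0 := by
  have chain : ∀ n, γ 1 * γ n ≤ γ 0 * γ (n + 1) := by
    intro n
    induction n with
    | zero => exact le_of_eq (mul_comm _ _)
    | succ n ih =>
      rcases eq_or_lt_of_le (hnn (n + 1)) with h0 | hpos
      · rw [← h0, mul_zero]
        exact mul_nonneg (hnn 0) (hnn (n + 2))
      · have h1 : γ 1 * (γ (n + 1) ^ 2) ≤ γ 1 * (γ n * γ (n + 2)) :=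
          mul_le_mul_of_nonneg_left (hconv n) (hnn 1)
        have h2 : γ 1 * γ n * γ (n + 2) ≤ γ 0 * γ (n + 1) * γ (n + 2) :=
          mul_le_mul_of_nonneg_right ih (hnn (n + 2))
        nlinarith [hpos]
  have pow : ∀ n, γ 1 ^ (n + 1) ≤ γ 0 ^ n * γ (n + 1) := by
    intro n
    induction n with
    | zero => simp
    | succ n ih =>
      calc γ 1 ^ (n + 2) = γ 1 ^ (n + 1) * γ 1 := by ring
        _ ≤ γ 0 ^ n * γ (n + 1) * γ 1 :=
            mul_le_mul_of_nonneg_right ih (hnn 1)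
        _ = γ 0 ^ n * (γ 1 * γ (n + 1)) := by ring
        _ ≤ γ 0 ^ n * (γ 0 * γ (n + 2)) :=
            mul_le_mul_of_nonneg_left (chain (n + 1)) (pow_nonneg (hnn 0) n)
        _ = γ 0 ^ (n + 1) * γ (n + 2) := by ring
  by_contra hlt
  push_neg at hlt
  have hγ1pos : 0 < γ 1 := lt_of_le_of_lt (mul_nonneg hc (hnn 0)) hlt
  rcases eq_or_lt_of_le (hnn 0) with h00 | h0pos
  · have h := hconv 0
    rw [← h00, zero_mul] at h
    nlinarith
  rcases eq_or_lt_of_le hc with hc0 | hcpos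
  · have h2 := hbd 2
    rw [← hc0] at h2
    have : γ 2 = 0 := le_antisymm (by simpa using h2) (hnn 2)
    have h := hconv 0
    rw [this, mul_zero] at h
    nlinarith
  · set r := γ 1 / (c * γ 0) with hr
    have hcγ : 0 < c * γ 0 := mul_pos hcpos h0pos
    have hr1 : 1 < r := (one_lt_div hcγ).mpr hlt
    have hbound : ∀ n : ℕ, r ^ (n + 1) ≤ K / γ 0 := by
      intro n
      rw [hr, div_pow, div_le_div_iff₀ (by positivity) h0pos]
      calc γ 1 ^ (n + 1) * γ 0 ≤ γ 0 ^ n * γ (n + 1) * γ 0 :=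
            mul_le_mul_of_nonneg_right (pow n) (le_of_lt h0pos)
        _ ≤ γ 0 ^ n * (K * c ^ (n + 1)) * γ 0 :=
            mul_le_mul_of_nonneg_right
              (mul_le_mul_of_nonneg_left (hbd (n + 1)) (pow_nonneg (hnn 0) n))
              (le_of_lt h0pos)
        _ = K * (c * γ 0) ^ (n + 1) := by ring
    obtain ⟨n, hn⟩ := pow_unbounded_of_one_lt (K / γ 0) hr1
    have := hbound n
    have hrn : r ^ n ≤ r ^ (n + 1) :=
      pow_le_pow_right₀ (le_of_lt hr1) (Nat.le_succ n)
    linarith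

/-- Cauchy criterion from a dominated square bound. -/
lemma aux_cauchy {E : Type*} [NormedAddCommGroup E]
    {s v w : ℕ → E} (c : ℝ) (hc : 0 ≤ c) (hv : CauchySeq v) (hw : CauchySeq w)
    (h : ∀ n m, ‖s n - s m‖ ^ 2 ≤ c * (‖v n - v m‖ ^ 2 + ‖w n - w m‖ ^ 2)) :
    CauchySeq s := by
  rw [Metric.cauchySeq_iff]
  intro ε hε
  set δ := ε / (2 * (Real.sqrt c + 1)) with hδ
  have hsq : 0 ≤ Real.sqrt c := Real.sqrt_nonneg c
  have hδpos : 0 < δ := by positivity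
  obtain ⟨N1, hN1⟩ := Metric.cauchySeq_iff.mp hv δ hδpos
  obtain ⟨N2, hN2⟩ := Metric.cauchySeq_iff.mp hw δ hδpos
  refine ⟨max N1 N2, fun n hn m hm => ?_⟩
  have h1 := hN1 n (le_trans (le_max_left _ _) hn) m (le_trans (le_max_left _ _) hm)
  have h2 := hN2 n (le_trans (le_max_right _ _) hn) m (le_trans (le_max_right _ _) hm)
  rw [dist_eq_norm] at h1 h2 ⊢
  have hc' : c ≤ (Real.sqrt c + 1) ^ 2 := by
    nlinarith [Real.sq_sqrt hc, Real.sqrt_nonneg c]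
  have key : ‖s n - s m‖ ^ 2 < ε ^ 2 := by
    have := h n m
    have hvn : ‖v n - v m‖ ^ 2 < δ ^ 2 := by nlinarith [norm_nonneg (v n - v m)]
    have hwn : ‖w n - w m‖ ^ 2 < δ ^ 2 := by nlinarith [norm_nonneg (w n - w m)]
    have hd2 : c * (2 * δ ^ 2) ≤ (Real.sqrt c + 1) ^ 2 * (2 * δ ^ 2) := by
      nlinarith [sq_nonneg δ]
    have hfin : (Real.sqrt c + 1) ^ 2 * (2 * δ ^ 2) < ε ^ 2 := by
      rw [hδ, div_pow]
      have h1pos : (0:ℝ) < (Real.sqrt c + 1) ^ 2 := by positivity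
      have : (2 * (Real.sqrt c + 1)) ^ 2 = (Real.sqrt c + 1) ^ 2 * 4 := by ring
      rw [this]
      rw [show (Real.sqrt c + 1) ^ 2 * (2 * (ε ^ 2 / ((Real.sqrt c + 1) ^ 2 * 4))) = ε ^ 2 / 2 by
        field_simp; ring]
      nlinarith [sq_nonneg ε, hε]
    nlinarith
  nlinarith [norm_nonneg (s n - s m), hε]

end AuxLemmas

/-- `M` is the modulus `|T| = (T* T)^{1/2}` of the densely defined closed operator `T`:
the unique nonnegative self-adjoint operator with `dom M = dom T` and `‖M f‖ = ‖T f‖`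
for all `f` in this common domain. -/
structure IsModulusOf
    {H₁ H₂ : Type*} [NormedAddCommGroup H₁] [InnerProductSpace ℂ H₁] [CompleteSpace H₁]
    [NormedAddCommGroup H₂] [InnerProductSpace ℂ H₂] [CompleteSpace H₂]
    (T : H₁ →ₗ.[ℂ] H₂) (M : H₁ →ₗ.[ℂ] H₁) : Prop where
  selfadj : IsSelfAdjoint M
  nonneg : ∀ (f : H₁) (hf : f ∈ M.domain), 0 ≤ (inner ℂ f (M ⟨f, hf⟩) : ℂ).re
  dom_eq : M.domain = T.domain
  norm_eq : ∀ (f : H₁) (hf : f ∈ M.domain) (hf' : f ∈ T.domain), ‖M ⟨f, hf⟩‖ = ‖T ⟨f, hf'⟩‖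

/-- `S` is the nonnegative self-adjoint square root `R^{1/2}` of the nonnegative
self-adjoint operator `R`:  `S` is nonnegative, self-adjoint, and `S ∘ S = R`
(including equality of the natural domains). -/
structure IsPosSqrtOf
    {H : Type*} [NormedAddCommGroup H] [InnerProductSpace ℂ H] [CompleteSpace H]
    (S R : H →ₗ.[ℂ] H) : Prop where
  selfadj : IsSelfAdjoint S
  nonneg : ∀ (f : H) (hf : f ∈ S.domain), 0 ≤ (inner ℂ f (S ⟨f, hf⟩) : ℂ).re
  dom_iff : ∀ f : H, f ∈ R.domain ↔ ∃ h : f ∈ S.domain, S ⟨f, h⟩ ∈ S.domain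
  sq_eq : ∀ (f : H) (hR : f ∈ R.domain) (h : f ∈ S.domain) (h2 : S ⟨f, h⟩ ∈ S.domain),
    R ⟨f, hR⟩ = S ⟨S ⟨f, h⟩, h2⟩


/-- Let `A ≥ 0` be self-adjoint and `B` densely defined closed in `H` with
`dom B ⊇ dom A`, so that `‖B f‖ ≤ a ‖A f‖ + b ‖f‖` for all `f ∈ dom A` for some `a, b ≥ 0`.
Then `dom |B|^{1/2} ⊇ dom A^{1/2}` and `‖ |B|^{1/2} (A + I)^{-1/2} ‖ ≤ (a + b)^{1/2}`.
Here `Rhalf` denotes the bounded operator `(A + I)^{-1/2}` (the nonnegative self-adjoint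
square root of `(A + I)⁻¹`), `SA = A^{1/2}` and `SB = |B|^{1/2}`. -/
theorem rel_bounded_implies_form_bounded
    {H : Type*} [NormedAddCommGroup H] [InnerProductSpace ℂ H] [CompleteSpace H]
    (A : H →ₗ.[ℂ] H) (hAsa : IsSelfAdjoint A)
    (hAnn : ∀ (f : H) (hf : f ∈ A.domain), 0 ≤ (inner ℂ f (A ⟨f, hf⟩) : ℂ).re)
    (B : H →ₗ.[ℂ] H) (hBdense : Dense (B.domain : Set H)) (hBclosed : B.IsClosed)
    (hdom : A.domain ≤ B.domain)
    (a b : ℝ) (ha : 0 ≤ a) (hb : 0 ≤ b)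
    (hbound : ∀ (f : H) (hf : f ∈ A.domain),
      ‖B ⟨f, hdom hf⟩‖ ≤ a * ‖A ⟨f, hf⟩‖ + b * ‖f‖)
    (modB : H →ₗ.[ℂ] H) (hmodB : IsModulusOf B modB)
    (SA SB : H →ₗ.[ℂ] H) (hSA : IsPosSqrtOf SA A) (hSB : IsPosSqrtOf SB modB)
    (Rhalf : H →L[ℂ] H) (hRsa : IsSelfAdjoint Rhalf)
    (hRnn : ∀ g : H, 0 ≤ (inner ℂ g (Rhalf g) : ℂ).re)
    (hRsq : ∀ g : H, ∃ h : Rhalf (Rhalf g) ∈ A.domain,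
      A ⟨Rhalf (Rhalf g), h⟩ + Rhalf (Rhalf g) = g)
    (hRinv : ∀ (f : H) (hf : f ∈ A.domain), Rhalf (Rhalf (A ⟨f, hf⟩ + f)) = f) :
    SA.domain ≤ SB.domain ∧
    ∀ g : H, ∃ h : Rhalf g ∈ SB.domain,
      ‖SB ⟨Rhalf g, h⟩‖ ≤ Real.sqrt (a + b) * ‖g‖ := by
  set c := a + b with hcdef
  have hc : 0 ≤ c := add_nonneg ha hb
  -- basic facts about Rhalf
  have hRsym : ∀ x y : H, (inner ℂ (Rhalf x) y : ℂ) = inner ℂ x (Rhalf y) :=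
    fun x y => (ContinuousLinearMap.isSelfAdjoint_iff_isSymmetric.mp hRsa) x y
  have hmemA : ∀ x : H, Rhalf (Rhalf x) ∈ A.domain := fun x => (hRsq x).choose
  have hAReq : ∀ x : H, (A ⟨Rhalf (Rhalf x), hmemA x⟩ : H) + Rhalf (Rhalf x) = x :=
    fun x => (hRsq x).choose_spec
  have hAR : ∀ x : H, (A ⟨Rhalf (Rhalf x), hmemA x⟩ : H) = x - Rhalf (Rhalf x) :=
    fun x => eq_sub_of_add_eq (hAReq x)
  have hRR_le : ∀ x : H, ‖Rhalf (Rhalf x)‖ ≤ ‖x‖ := by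
    intro x
    set u := Rhalf (Rhalf x) with hu
    have h1 : ‖u‖ ^ 2 ≤ (inner ℂ u x : ℂ).re := by
      rw [← hAReq x, inner_add_right]
      have := hAnn u (hmemA x)
      have h2 : (inner ℂ u u : ℂ).re = ‖u‖ ^ 2 := inner_self_eq_norm_sq (𝕜 := ℂ) u
      simp only [Complex.add_re]
      linarith
    have h2 : (inner ℂ u x : ℂ).re ≤ ‖u‖ * ‖x‖ := re_inner_le_norm (𝕜 := ℂ) u x
    nlinarith [norm_nonneg u, norm_nonneg x]
  have hRhalfsq : ∀ x : H, ‖Rhalf x‖ ^ 2 = (inner ℂ x (Rhalf (Rhalf x)) : ℂ).re := by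
    intro x
    rw [← inner_self_eq_norm_sq (𝕜 := ℂ) (Rhalf x), hRsym x (Rhalf x)]
    rfl
  have hRhalf_le : ∀ x : H, ‖Rhalf x‖ ≤ ‖x‖ := by
    intro x
    have h1 : ‖Rhalf x‖ ^ 2 ≤ ‖x‖ * ‖Rhalf (Rhalf x)‖ :=
      (hRhalfsq x) ▸ re_inner_le_norm (𝕜 := ℂ) x (Rhalf (Rhalf x))
    have h2 := hRR_le x
    nlinarith [norm_nonneg (Rhalf x), norm_nonneg x, norm_nonneg (Rhalf (Rhalf x))]
  have hAnorm : ∀ x : H, ‖(A ⟨Rhalf (Rhalf x), hmemA x⟩ : H)‖ ≤ ‖x‖ := by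
    intro x
    set u := Rhalf (Rhalf x) with hu
    set w := (A ⟨u, hmemA x⟩ : H) with hw
    have h1 : ‖x‖ ^ 2 = ‖w‖ ^ 2 + 2 * (inner ℂ w u : ℂ).re + ‖u‖ ^ 2 := by
      rw [← hAReq x]
      exact norm_add_sq (𝕜 := ℂ) w u
    have h2 : 0 ≤ (inner ℂ w u : ℂ).re := by
      rw [show (inner ℂ w u : ℂ).re = (inner ℂ u w : ℂ).re from inner_re_symm (𝕜 := ℂ) w u]
      exact hAnn u (hmemA x)
    nlinarith [norm_nonneg w, norm_nonneg x, sq_nonneg ‖u‖]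
  -- domain inclusions
  have hABdom : A.domain ≤ modB.domain := by rw [hmodB.dom_eq]; exact hdom
  have hBSB : modB.domain ≤ SB.domain := fun f hf => ((hSB.dom_iff f).mp hf).choose
  have hASB : A.domain ≤ SB.domain := fun f hf => hBSB (hABdom hf)
  have hASA : A.domain ≤ SA.domain := fun f hf => ((hSA.dom_iff f).mp hf).choose
  -- norm bound for modB on the range of R
  have hMvalR : ∀ x : H, ‖(modB ⟨Rhalf (Rhalf x), hABdom (hmemA x)⟩ : H)‖ ≤ c * ‖x‖ := by
    intro x
    have h1 : ‖(modB ⟨Rhalf (Rhalf x), hABdom (hmemA x)⟩ : H)‖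
        = ‖(B ⟨Rhalf (Rhalf x), hdom (hmemA x)⟩ : H)‖ :=
      hmodB.norm_eq _ (hABdom (hmemA x)) (hdom (hmemA x))
    rw [h1]
    calc ‖(B ⟨Rhalf (Rhalf x), hdom (hmemA x)⟩ : H)‖
        ≤ a * ‖(A ⟨Rhalf (Rhalf x), hmemA x⟩ : H)‖ + b * ‖Rhalf (Rhalf x)‖ :=
          hbound _ (hmemA x)
      _ ≤ a * ‖x‖ + b * ‖x‖ := by
          gcongr
          · exact hAnorm x
          · exact hRR_le x
      _ = c * ‖x‖ := by rw [hcdef]; ring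
  -- the key quadratic-form identities
  have keySB : ∀ (u v : H) (hu : u ∈ SB.domain) (hv : v ∈ modB.domain) (hv1 : v ∈ SB.domain),
      (inner ℂ u (modB ⟨v, hv⟩ : H) : ℂ) = inner ℂ (SB ⟨u, hu⟩ : H) (SB ⟨v, hv1⟩ : H) := by
    intro u v hu hv hv1
    obtain ⟨h1, h2⟩ := (hSB.dom_iff v).mp hv
    rw [hSB.sq_eq v hv h1 h2]
    exact (pmap_symm hSB.selfadj hu h2).symm
  have keySA : ∀ (u : H) (hu : u ∈ A.domain),
      (inner ℂ u (A ⟨u, hu⟩ : H) : ℂ).re = ‖(SA ⟨u, hASA hu⟩ : H)‖ ^ 2 := by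
    intro u hu
    obtain ⟨h1, h2⟩ := (hSA.dom_iff u).mp hu
    rw [hSA.sq_eq u hu h1 h2, ← pmap_symm hSA.selfadj h1 h2]
    exact inner_self_eq_norm_sq (𝕜 := ℂ) _
  -- Step 1: ∀ x, ‖SB (R x)‖² ≤ c ‖Rhalf x‖²
  have step1 : ∀ x : H,
      ‖(SB ⟨Rhalf (Rhalf x), hASB (hmemA x)⟩ : H)‖ ^ 2 ≤ c * ‖Rhalf x‖ ^ 2 := by
    intro x
    set hs : ℕ → H := fun n =>
      Nat.rec x (fun _ p => (modB ⟨Rhalf (Rhalf p), hABdom (hmemA p)⟩ : H)) n with hhs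
    have hs0 : hs 0 = x := rfl
    have hsS : ∀ n, hs (n + 1) = (modB ⟨Rhalf (Rhalf (hs n)), hABdom (hmemA (hs n))⟩ : H) :=
      fun n => rfl
    have hnorm : ∀ n, ‖hs n‖ ≤ c ^ n * ‖x‖ := by
      intro n
      induction n with
      | zero => simp [hs0]
      | succ n ih =>
        rw [hsS n]
        calc ‖(modB ⟨Rhalf (Rhalf (hs n)), hABdom (hmemA (hs n))⟩ : H)‖
            ≤ c * ‖hs n‖ := hMvalR (hs n)
          _ ≤ c * (c ^ n * ‖x‖) := mul_le_mul_of_nonneg_left ih hc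
          _ = c ^ (n + 1) * ‖x‖ := by ring
    have shift : ∀ j k, (inner ℂ (Rhalf (Rhalf (hs j))) (hs (k + 1)) : ℂ)
        = inner ℂ (Rhalf (Rhalf (hs (j + 1)))) (hs k) := by
      intro j k
      rw [hsS k]
      rw [← pmap_symm hmodB.selfadj (hABdom (hmemA (hs j))) (hABdom (hmemA (hs k)))]
      rw [← hsS j]
      rw [← hRsym (hs (j+1)) (Rhalf (hs k))]
      exact (hRsym (Rhalf (hs (j+1))) (hs k)).symm
    have split : ∀ j k, (inner ℂ (Rhalf (Rhalf x)) (hs (j + k)) : ℂ)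
        = inner ℂ (Rhalf (Rhalf (hs j))) (hs k) := by
      intro j
      induction j with
      | zero => intro k; rw [hs0]; norm_num
      | succ j ih =>
        intro k
        have e : j + 1 + k = j + (k + 1) := by omega
        rw [e, ih (k + 1), shift j k]
    set γ : ℕ → ℝ := fun n => (inner ℂ (Rhalf (Rhalf x)) (hs n) : ℂ).re with hγ
    have γeven : ∀ k, γ (k + k) = ‖Rhalf (hs k)‖ ^ 2 := by
      intro k
      rw [hγ]
      simp only []
      rw [split k k, hRsym (Rhalf (hs k)) (hs k)]
      exact inner_self_eq_norm_sq (𝕜 := ℂ) _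
    have γodd : ∀ k, γ (k + (k + 1))
        = ‖(SB ⟨Rhalf (Rhalf (hs k)), hASB (hmemA (hs k))⟩ : H)‖ ^ 2 := by
      intro k
      rw [hγ]
      simp only []
      rw [split k (k + 1), hsS k]
      rw [keySB _ _ (hASB (hmemA (hs k))) (hABdom (hmemA (hs k))) (hASB (hmemA (hs k)))]
      exact inner_self_eq_norm_sq (𝕜 := ℂ) _
    have γnn : ∀ n, 0 ≤ γ n := by
      intro n
      rcases Nat.even_or_odd n with ⟨k, hk⟩ | ⟨k, hk⟩
      · rw [hk, γeven k]; positivity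
      · rw [hk, show 2 * k + 1 = k + (k + 1) by omega, γodd k]; positivity
    have γbd : ∀ n, γ n ≤ ‖x‖ ^ 2 * c ^ n := by
      intro n
      have h1 : γ n ≤ ‖(inner ℂ (Rhalf (Rhalf x)) (hs n) : ℂ)‖ := by
        rw [hγ]
        simp only []
        exact Complex.re_le_norm _
      have h2 : ‖(inner ℂ (Rhalf (Rhalf x)) (hs n) : ℂ)‖ ≤ ‖Rhalf (Rhalf x)‖ * ‖hs n‖ :=
        norm_inner_le_norm _ _
      have h3 : ‖Rhalf (Rhalf x)‖ * ‖hs n‖ ≤ ‖x‖ * (c ^ n * ‖x‖) :=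
        mul_le_mul (hRR_le x) (hnorm n) (norm_nonneg _) (norm_nonneg _)
      calc γ n ≤ ‖x‖ * (c ^ n * ‖x‖) := le_trans h1 (le_trans h2 h3)
        _ = ‖x‖ ^ 2 * c ^ n := by ring
    have γconv : ∀ n, γ (n + 1) ^ 2 ≤ γ n * γ (n + 2) := by
      intro n
      rcases Nat.even_or_odd n with ⟨k, hk⟩ | ⟨k, hk⟩
      · -- n = k + k
        have e1 : n + 1 = k + (k + 1) := by omega
        have e2 : n + 2 = (k + 1) + (k + 1) := by omega
        have h1 : γ (n + 1) ≤ ‖Rhalf (hs k)‖ * ‖Rhalf (hs (k + 1))‖ := by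
          rw [hγ, e1]
          simp only []
          rw [split k (k + 1), hRsym (Rhalf (hs k)) (hs (k+1))]
          calc (inner ℂ (Rhalf (hs k)) (Rhalf (hs (k+1))) : ℂ).re
              ≤ ‖(inner ℂ (Rhalf (hs k)) (Rhalf (hs (k+1))) : ℂ)‖ := by
                exact Complex.re_le_norm _
            _ ≤ ‖Rhalf (hs k)‖ * ‖Rhalf (hs (k + 1))‖ := norm_inner_le_norm _ _
        have h0 : 0 ≤ γ (n + 1) := γnn (n + 1)
        have := pow_le_pow_left₀ h0 h1 2
        calc γ (n + 1) ^ 2 ≤ (‖Rhalf (hs k)‖ * ‖Rhalf (hs (k + 1))‖) ^ 2 := this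
          _ = ‖Rhalf (hs k)‖ ^ 2 * ‖Rhalf (hs (k + 1))‖ ^ 2 := by ring
          _ = γ n * γ (n + 2) := by
              have ge0 : γ n = ‖Rhalf (hs k)‖ ^ 2 := by rw [hk]; exact γeven k
              have ge2 : γ (n + 2) = ‖Rhalf (hs (k + 1))‖ ^ 2 := by rw [e2]; exact γeven (k + 1)
              rw [ge0, ge2]
      · -- n = 2k + 1
        have e1 : n + 1 = k + (k + 2) := by omega
        have e0 : n = k + (k + 1) := by omega
        have e2 : n + 2 = (k + 1) + (k + 2) := by omega
        have h1 : γ (n + 1) ≤ ‖(SB ⟨Rhalf (Rhalf (hs k)), hASB (hmemA (hs k))⟩ : H)‖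
            * ‖(SB ⟨Rhalf (Rhalf (hs (k + 1))), hASB (hmemA (hs (k + 1)))⟩ : H)‖ := by
          rw [hγ, e1]
          simp only []
          rw [split k (k + 2), show k + 2 = (k + 1) + 1 from rfl, hsS (k + 1)]
          rw [keySB _ _ (hASB (hmemA (hs k))) (hABdom (hmemA (hs (k + 1))))
            (hASB (hmemA (hs (k + 1))))]
          calc (inner ℂ ((SB ⟨Rhalf (Rhalf (hs k)), hASB (hmemA (hs k))⟩ : H))
                ((SB ⟨Rhalf (Rhalf (hs (k+1))), hASB (hmemA (hs (k+1)))⟩ : H)) : ℂ).re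
              ≤ ‖(inner ℂ ((SB ⟨Rhalf (Rhalf (hs k)), hASB (hmemA (hs k))⟩ : H))
                ((SB ⟨Rhalf (Rhalf (hs (k+1))), hASB (hmemA (hs (k+1)))⟩ : H)) : ℂ)‖ := by
                exact Complex.re_le_norm _
            _ ≤ _ := norm_inner_le_norm _ _
        have h0 : 0 ≤ γ (n + 1) := γnn (n + 1)
        have := pow_le_pow_left₀ h0 h1 2
        calc γ (n + 1) ^ 2
            ≤ (‖(SB ⟨Rhalf (Rhalf (hs k)), hASB (hmemA (hs k))⟩ : H)‖
              * ‖(SB ⟨Rhalf (Rhalf (hs (k + 1))), hASB (hmemA (hs (k + 1)))⟩ : H)‖) ^ 2 := this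
          _ = ‖(SB ⟨Rhalf (Rhalf (hs k)), hASB (hmemA (hs k))⟩ : H)‖ ^ 2
              * ‖(SB ⟨Rhalf (Rhalf (hs (k + 1))), hASB (hmemA (hs (k + 1)))⟩ : H)‖ ^ 2 := by
                ring
          _ = γ n * γ (n + 2) := by
              have ge0 : γ n
                  = ‖(SB ⟨Rhalf (Rhalf (hs k)), hASB (hmemA (hs k))⟩ : H)‖ ^ 2 := by
                rw [e0]; exact γodd k
              have ge2 : γ (n + 2)
                  = ‖(SB ⟨Rhalf (Rhalf (hs (k + 1))), hASB (hmemA (hs (k + 1)))⟩ : H)‖ ^ 2 := by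
                rw [e2]; exact γodd (k + 1)
              rw [ge0, ge2]
    have hmain : γ 1 ≤ c * γ 0 := aux_gamma γ c (‖x‖ ^ 2) hc γnn γconv γbd
    have g1 : γ 1 = ‖(SB ⟨Rhalf (Rhalf x), hASB (hmemA x)⟩ : H)‖ ^ 2 := by
      have := γodd 0
      simpa [hs0] using this
    have g0 : γ 0 = ‖Rhalf x‖ ^ 2 := by
      have := γeven 0
      simpa [hs0] using this
    rw [← g1, ← g0]
    exact hmain
  
  -- (★) bound on dom A
  have starbound : ∀ (u : H) (hu : u ∈ A.domain),
      ‖(SB ⟨u, hASB hu⟩ : H)‖ ^ 2 ≤ c * ‖Rhalf ((A ⟨u, hu⟩ : H) + u)‖ ^ 2 := by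
    intro u hu
    have h := step1 ((A ⟨u, hu⟩ : H) + u)
    have he : (⟨Rhalf (Rhalf ((A ⟨u, hu⟩ : H) + u)), hASB (hmemA _)⟩ : SB.domain)
        = ⟨u, hASB hu⟩ := Subtype.ext (hRinv u hu)
    rwa [he] at h
  have starSA : ∀ (u : H) (hu : u ∈ A.domain),
      ‖Rhalf ((A ⟨u, hu⟩ : H) + u)‖ ^ 2 = ‖(SA ⟨u, hASA hu⟩ : H)‖ ^ 2 + ‖u‖ ^ 2 := by
    intro u hu
    rw [hRhalfsq ((A ⟨u, hu⟩ : H) + u), hRinv u hu, inner_add_left]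
    have h1 : (inner ℂ ((A ⟨u, hu⟩ : H)) u : ℂ).re = ‖(SA ⟨u, hASA hu⟩ : H)‖ ^ 2 := by
      rw [show (inner ℂ ((A ⟨u, hu⟩ : H)) u : ℂ).re = (inner ℂ u ((A ⟨u, hu⟩ : H)) : ℂ).re
        from inner_re_symm (𝕜 := ℂ) _ _]
      exact keySA u hu
    have h2 : (inner ℂ u u : ℂ).re = ‖u‖ ^ 2 := inner_self_eq_norm_sq (𝕜 := ℂ) u
    simp only [Complex.add_re]
    rw [h1, h2]
  have starTot : ∀ (u : H) (hu : u ∈ A.domain),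
      ‖(SB ⟨u, hASB hu⟩ : H)‖ ^ 2 ≤ c * (‖(SA ⟨u, hASA hu⟩ : H)‖ ^ 2 + ‖u‖ ^ 2) := by
    intro u hu
    rw [← starSA u hu]; exact starbound u hu
  -- the operator T = 1 - Rhalf²
  set T : H →L[ℂ] H := 1 - Rhalf * Rhalf with hTdef
  have hT : ∀ y : H, T y = y - Rhalf (Rhalf y) := by
    intro y
    rw [hTdef]
    simp [ContinuousLinearMap.sub_apply, ContinuousLinearMap.mul_apply,
      ContinuousLinearMap.one_apply]
  have hTpowS : ∀ (n : ℕ) (y : H), (T ^ (n + 1)) y = T ((T ^ n) y) := by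
    intro n y
    rw [pow_succ', ContinuousLinearMap.mul_apply]
  have hTR : ∀ y : H, Rhalf (T y) = T (Rhalf y) := by
    intro y; rw [hT, hT, map_sub]
  have hTRpow : ∀ (n : ℕ) (y : H), Rhalf ((T ^ n) y) = (T ^ n) (Rhalf y) := by
    intro n
    induction n with
    | zero => intro y; simp
    | succ n ih =>
      intro y
      rw [hTpowS n y, hTR ((T ^ n) y), ih y, ← hTpowS n (Rhalf y)]
  have hTsym : ∀ x y : H, (inner ℂ (T x) y : ℂ) = inner ℂ x (T y) := by
    intro x y
    rw [hT, hT, inner_sub_left, inner_sub_right, hRsym (Rhalf x) y, hRsym x (Rhalf y)]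
  have hTsplit : ∀ (x : H) (i j : ℕ),
      (inner ℂ ((T ^ i) x) ((T ^ j) x) : ℂ) = inner ℂ x ((T ^ (i + j)) x) := by
    intro x i
    induction i with
    | zero => intro j; simp
    | succ i ih =>
      intro j
      rw [hTpowS i x, hTsym ((T ^ i) x) ((T ^ j) x), ← hTpowS j x, ih (j + 1),
        show i + (j + 1) = i + 1 + j by omega]
  have hTnn : ∀ x : H, 0 ≤ (inner ℂ x (T x) : ℂ).re := by
    intro x
    rw [hT, inner_sub_right]
    simp only [Complex.sub_re]
    rw [show (inner ℂ x x : ℂ).re = ‖x‖ ^ 2 from inner_self_eq_norm_sq (𝕜 := ℂ) x,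
      show (inner ℂ x (Rhalf (Rhalf x)) : ℂ).re = ‖Rhalf x‖ ^ 2 from (hRhalfsq x).symm]
    nlinarith [hRhalf_le x, norm_nonneg (Rhalf x), norm_nonneg x]
  have hTle1 : ∀ x : H, (inner ℂ x (T x) : ℂ).re ≤ ‖x‖ ^ 2 := by
    intro x
    rw [hT, inner_sub_right]
    simp only [Complex.sub_re]
    rw [show (inner ℂ x x : ℂ).re = ‖x‖ ^ 2 from inner_self_eq_norm_sq (𝕜 := ℂ) x,
      show (inner ℂ x (Rhalf (Rhalf x)) : ℂ).re = ‖Rhalf x‖ ^ 2 from (hRhalfsq x).symm]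
    nlinarith [sq_nonneg ‖Rhalf x‖]
  have hTnormsq : ∀ x : H, ‖T x‖ ^ 2 ≤ (inner ℂ x (T x) : ℂ).re := by
    intro x
    have h0 : 0 ≤ (inner ℂ (x - T x) (T x) : ℂ).re := by
      have e : x - T x = Rhalf (Rhalf x) := by rw [hT]; abel
      rw [e, show (inner ℂ (Rhalf (Rhalf x)) (T x) : ℂ) = inner ℂ (Rhalf x) (Rhalf (T x))
        from hRsym (Rhalf x) (T x), hTR x]
      exact hTnn (Rhalf x)
    rw [inner_sub_left] at h0
    simp only [Complex.sub_re] at h0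
    have h3 : (inner ℂ (T x) (T x) : ℂ).re = ‖T x‖ ^ 2 := inner_self_eq_norm_sq (𝕜 := ℂ) _
    linarith
  -- strong convergence Tⁿ → 0
  have Ttend : ∀ x : H, Tendsto (fun n => (T ^ n) x) atTop (nhds 0) := by
    intro x
    set aseq : ℕ → ℝ := fun n => (inner ℂ x ((T ^ n) x) : ℂ).re with haseq
    have ha_even : ∀ i, aseq (i + i) = ‖(T ^ i) x‖ ^ 2 := by
      intro i
      rw [haseq]
      simp only []
      rw [← hTsplit x i i]
      exact inner_self_eq_norm_sq (𝕜 := ℂ) _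
    have ha_odd : ∀ i, aseq (i + (i + 1)) = (inner ℂ ((T ^ i) x) (T ((T ^ i) x)) : ℂ).re := by
      intro i
      rw [haseq]
      simp only []
      rw [← hTsplit x i (i + 1), hTpowS i x]
    have ha_nn : ∀ n, 0 ≤ aseq n := by
      intro n
      rcases Nat.even_or_odd n with ⟨i, hi⟩ | ⟨i, hi⟩
      · rw [hi, ha_even i]; positivity
      · rw [hi, show 2 * i + 1 = i + (i + 1) by omega, ha_odd i]
        exact hTnn _
    have ha_mono : ∀ n, aseq (n + 1) ≤ aseq n := by
      intro n
      rcases Nat.even_or_odd n with ⟨i, hi⟩ | ⟨i, hi⟩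
      · rw [hi, show i + i + 1 = i + (i + 1) by omega, ha_odd i, ha_even i]
        exact hTle1 _
      · rw [hi, show 2 * i + 1 + 1 = (i + 1) + (i + 1) by omega,
          show 2 * i + 1 = i + (i + 1) by omega, ha_even (i + 1), ha_odd i, hTpowS i x]
        exact hTnormsq _
    have hbdd : BddBelow (Set.range aseq) := by
      refine ⟨0, ?_⟩
      rintro y ⟨n, rfl⟩
      exact ha_nn n
    have hanti : Antitone aseq := antitone_nat_of_succ_le ha_mono
    have haL : Tendsto aseq atTop (nhds (⨅ n, aseq n)) := tendsto_atTop_ciInf hanti hbdd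
    set L := ⨅ n, aseq n with hL
    have hcau : CauchySeq (fun n => (T ^ n) x) := by
      rw [Metric.cauchySeq_iff]
      intro ε hε
      have hε4 : 0 < ε ^ 2 / 4 := by positivity
      obtain ⟨N, hN⟩ := (Metric.tendsto_atTop.mp haL) (ε ^ 2 / 4) hε4
      refine ⟨N, fun n hn m hm => ?_⟩
      have hsq : ‖(T ^ n) x - (T ^ m) x‖ ^ 2
          = aseq (n + n) - 2 * aseq (n + m) + aseq (m + m) := by
        rw [norm_sub_sq (𝕜 := ℂ), hTsplit x n m, ← ha_even n, ← ha_even m]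
        rfl
      have h1 := hN (n + n) (by omega)
      have h2 := hN (n + m) (by omega)
      have h3 := hN (m + m) (by omega)
      rw [Real.dist_eq] at h1 h2 h3
      have b1 := abs_lt.mp h1
      have b2 := abs_lt.mp h2
      have b3 := abs_lt.mp h3
      rw [dist_eq_norm]
      have hlt : ‖(T ^ n) x - (T ^ m) x‖ ^ 2 < ε ^ 2 := by
        rw [hsq]; linarith [b1.2, b2.1, b3.2]
      nlinarith [norm_nonneg ((T ^ n) x - (T ^ m) x), hε]
    obtain ⟨p, hp⟩ := cauchySeq_tendsto_of_complete hcau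
    have h1 : Tendsto (fun n => (T ^ (n + 1)) x) atTop (nhds p) :=
      hp.comp (tendsto_add_atTop_nat 1)
    have h2 : Tendsto (fun n => T ((T ^ n) x)) atTop (nhds (T p)) :=
      (T.continuous.tendsto p).comp hp
    have hTp : T p = p := by
      refine tendsto_nhds_unique ?_ h1
      have : (fun n => (T ^ (n + 1)) x) = fun n => T ((T ^ n) x) := funext fun n => hTpowS n x
      rw [this]
      exact h2
    have hRp : Rhalf (Rhalf p) = 0 := by
      have h := hT p
      rw [hTp] at h
      exact sub_eq_self.mp h.symm
    have hp0 : p = 0 := by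
      have h := hAReq p
      have he : (⟨Rhalf (Rhalf p), hmemA p⟩ : A.domain) = 0 := Subtype.ext hRp
      rw [he, LinearPMap.map_zero, hRp] at h
      simpa using h.symm
    rwa [hp0] at hp
  -- approximation of any vector from dom A
  have happrox : ∀ (v : H) (n : ℕ), ∃ h : v - (T ^ n) v ∈ A.domain,
      (A ⟨v - (T ^ n) v, h⟩ : H) + (v - (T ^ n) v) = ∑ k ∈ Finset.range n, (T ^ k) v := by
    intro v n
    induction n with
    | zero =>
      have e : v - (T ^ 0) v = 0 := by simp
      have hm : v - (T ^ 0) v ∈ A.domain := by rw [e]; exact A.domain.zero_mem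
      refine ⟨hm, ?_⟩
      rw [show (⟨v - (T ^ 0) v, hm⟩ : A.domain) = 0 from Subtype.ext e,
        LinearPMap.map_zero, e]
      simp
    | succ n ih =>
      obtain ⟨hm, hval⟩ := ih
      have hy : (T ^ n) v - (T ^ (n + 1)) v = Rhalf (Rhalf ((T ^ n) v)) := by
        rw [hTpowS n v, hT ((T ^ n) v)]
        abel
      have e : v - (T ^ (n + 1)) v = (v - (T ^ n) v) + Rhalf (Rhalf ((T ^ n) v)) := by
        rw [← hy]; abel
      have hm2 : v - (T ^ (n + 1)) v ∈ A.domain := by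
        rw [e]; exact A.domain.add_mem hm (hmemA _)
      refine ⟨hm2, ?_⟩
      have he : (⟨v - (T ^ (n + 1)) v, hm2⟩ : A.domain)
          = ⟨(v - (T ^ n) v) + Rhalf (Rhalf ((T ^ n) v)),
              A.domain.add_mem hm (hmemA _)⟩ := Subtype.ext e
      rw [he, pmap_add_val A hm (hmemA _), hAR ((T ^ n) v), Finset.sum_range_succ, ← hval, e]
      abel
  -- second goal
  have goal2 : ∀ g : H, ∃ h : Rhalf g ∈ SB.domain,
      ‖(SB ⟨Rhalf g, h⟩ : H)‖ ≤ Real.sqrt c * ‖g‖ := by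
    intro g
    set v := Rhalf g with hv
    set xs : ℕ → H := fun n => v - (T ^ n) v with hxs
    have memx : ∀ n, xs n ∈ A.domain := fun n => (happrox v n).choose
    have valx : ∀ n, (A ⟨xs n, memx n⟩ : H) + xs n = ∑ k ∈ Finset.range n, (T ^ k) v :=
      fun n => (happrox v n).choose_spec
    have hRg : Rhalf v = g - T g := by
      rw [hT g, hv]
      abel
    have hRsum : ∀ n, Rhalf ((A ⟨xs n, memx n⟩ : H) + xs n) = g - (T ^ n) g := by
      intro n
      rw [valx n, map_sum]
      have hterm : ∀ k ∈ Finset.range n, Rhalf ((T ^ k) v) = (T ^ k) g - (T ^ (k + 1)) g := by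
        intro k _
        rw [hTRpow k v, hRg, map_sub, pow_succ, ContinuousLinearMap.mul_apply]
      rw [Finset.sum_congr rfl hterm, Finset.sum_range_sub' (fun k => (T ^ k) g)]
      simp
    have sbound : ∀ n, ‖(SB ⟨xs n, hASB (memx n)⟩ : H)‖ ^ 2 ≤ c * ‖g - (T ^ n) g‖ ^ 2 := by
      intro n
      have h := starbound (xs n) (memx n)
      rwa [hRsum n] at h
    have hdiffmem : ∀ n m, xs n - xs m ∈ A.domain :=
      fun n m => A.domain.sub_mem (memx n) (memx m)
    have sdiff : ∀ n m,
        ‖(SB ⟨xs n, hASB (memx n)⟩ : H) - (SB ⟨xs m, hASB (memx m)⟩ : H)‖ ^ 2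
          ≤ c * ‖(g - (T ^ n) g) - (g - (T ^ m) g)‖ ^ 2 := by
      intro n m
      have h1 := starbound (xs n - xs m) (hdiffmem n m)
      rw [pmap_sub_val SB (hASB (memx n)) (hASB (memx m))] at h1
      have h2 : (A ⟨xs n - xs m, hdiffmem n m⟩ : H) + (xs n - xs m)
          = ((A ⟨xs n, memx n⟩ : H) + xs n) - ((A ⟨xs m, memx m⟩ : H) + xs m) := by
        rw [pmap_sub_val A (memx n) (memx m)]
        abel
      rw [h2, map_sub, hRsum n, hRsum m] at h1
      exact h1
    have hvc : CauchySeq (fun n => g - (T ^ n) g) :=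
      (tendsto_const_nhds.sub (Ttend g)).cauchySeq
    have hcau : CauchySeq (fun n => (SB ⟨xs n, hASB (memx n)⟩ : H)) := by
      apply aux_cauchy c hc hvc hvc
      intro n m
      have h := sdiff n m
      nlinarith [sq_nonneg ‖(g - (T ^ n) g) - (g - (T ^ m) g)‖, hc]
    obtain ⟨y, hy⟩ := cauchySeq_tendsto_of_complete hcau
    have hxs_tend : Tendsto xs atTop (nhds (Rhalf g)) := by
      have h : Tendsto (fun n => v - (T ^ n) v) atTop (nhds (v - 0)) :=
        tendsto_const_nhds.sub (Ttend v)
      simpa [hxs, hv] using h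
    obtain ⟨hmem, heq⟩ := pmap_closed_limit hSB.selfadj (fun n => hASB (memx n)) hxs_tend hy
    refine ⟨hmem, ?_⟩
    rw [heq]
    have hnrm : ∀ n, ‖(SB ⟨xs n, hASB (memx n)⟩ : H)‖ ≤ Real.sqrt c * ‖g - (T ^ n) g‖ := by
      intro n
      have h1 := sbound n
      have h2 : ‖(SB ⟨xs n, hASB (memx n)⟩ : H)‖
          = Real.sqrt (‖(SB ⟨xs n, hASB (memx n)⟩ : H)‖ ^ 2) :=
        (Real.sqrt_sq (norm_nonneg _)).symm
      rw [h2]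
      calc Real.sqrt (‖(SB ⟨xs n, hASB (memx n)⟩ : H)‖ ^ 2)
          ≤ Real.sqrt (c * ‖g - (T ^ n) g‖ ^ 2) := Real.sqrt_le_sqrt h1
        _ = Real.sqrt c * ‖g - (T ^ n) g‖ := by
            rw [Real.sqrt_mul hc, Real.sqrt_sq (norm_nonneg _)]
    have hl1 : Tendsto (fun n => ‖(SB ⟨xs n, hASB (memx n)⟩ : H)‖) atTop (nhds ‖y‖) :=
      hy.norm
    have hl2 : Tendsto (fun n => Real.sqrt c * ‖g - (T ^ n) g‖) atTop
        (nhds (Real.sqrt c * ‖g‖)) := by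
      have h : Tendsto (fun n => g - (T ^ n) g) atTop (nhds g) := by
        simpa using tendsto_const_nhds.sub (Ttend g)
      exact (h.norm).const_mul _
    exact le_of_tendsto_of_tendsto' hl1 hl2 hnrm
  -- commutation of SA with Rhalf²
  have comm : ∀ (w : H) (hw : w ∈ SA.domain),
      (SA ⟨Rhalf (Rhalf w), hASA (hmemA w)⟩ : H) = Rhalf (Rhalf (SA ⟨w, hw⟩ : H)) := by
    intro w hw
    set lhs := (SA ⟨Rhalf (Rhalf w), hASA (hmemA w)⟩ : H) with hlhs
    set rhs := Rhalf (Rhalf (SA ⟨w, hw⟩ : H)) with hrhs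
    have key : ∀ z : H, (inner ℂ lhs z : ℂ) = inner ℂ rhs z := by
      intro z
      have hvmem : Rhalf (Rhalf z) ∈ A.domain := hmemA z
      set vv := Rhalf (Rhalf z) with hvv
      have hz : (A ⟨vv, hvmem⟩ : H) + vv = z := hAReq z
      obtain ⟨hv1, hv2⟩ := (hSA.dom_iff vv).mp hvmem
      obtain ⟨hw1, hw2⟩ := (hSA.dom_iff (Rhalf (Rhalf w))).mp (hmemA w)
      have t2 : (inner ℂ lhs vv : ℂ) = inner ℂ (Rhalf (Rhalf w)) (SA ⟨vv, hv1⟩ : H) :=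
        pmap_symm hSA.selfadj hw1 hv1
      have t1 : (inner ℂ lhs ((A ⟨vv, hvmem⟩ : H)) : ℂ)
          = inner ℂ w (SA ⟨vv, hv1⟩ : H) - inner ℂ (Rhalf (Rhalf w)) (SA ⟨vv, hv1⟩ : H) := by
        rw [hSA.sq_eq vv hvmem hv1 hv2]
        rw [hlhs, ← pmap_symm hSA.selfadj hw2 hv2,
          ← hSA.sq_eq (Rhalf (Rhalf w)) (hmemA w) hw1 hw2, hAR w, inner_sub_left]
      have hL : (inner ℂ lhs z : ℂ) = inner ℂ w (SA ⟨vv, hv1⟩ : H) := by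
        rw [← hz, inner_add_right, t1, t2]
        ring
      have hRR : (inner ℂ rhs z : ℂ) = inner ℂ w (SA ⟨vv, hv1⟩ : H) := by
        rw [hrhs, hRsym (Rhalf (SA ⟨w, hw⟩ : H)) z, hRsym (SA ⟨w, hw⟩ : H) (Rhalf z)]
        exact pmap_symm hSA.selfadj hw hv1
      rw [hL, hRR]
    have hz : lhs - rhs = 0 := by
      have h2 : (inner ℂ (lhs - rhs) (lhs - rhs) : ℂ) = 0 := by
        rw [inner_sub_left, key (lhs - rhs), sub_self]
      exact inner_self_eq_zero.mp h2
    exact sub_eq_zero.mp hz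
  -- SA commutes with powers of T
  have hTSA : ∀ (w : H) (hw : w ∈ SA.domain) (n : ℕ),
      ∃ h : (T ^ n) w ∈ SA.domain, (SA ⟨(T ^ n) w, h⟩ : H) = (T ^ n) (SA ⟨w, hw⟩ : H) := by
    intro w hw n
    induction n with
    | zero =>
      have e : (T ^ 0) w = w := by simp
      have hm : (T ^ 0) w ∈ SA.domain := by rw [e]; exact hw
      refine ⟨hm, ?_⟩
      rw [show (⟨(T ^ 0) w, hm⟩ : SA.domain) = ⟨w, hw⟩ from Subtype.ext e]
      simp
    | succ n ih =>
      obtain ⟨hm, hval⟩ := ih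
      have e : (T ^ (n + 1)) w = (T ^ n) w - Rhalf (Rhalf ((T ^ n) w)) := by
        rw [hTpowS n w, hT ((T ^ n) w)]
      have hm2 : (T ^ (n + 1)) w ∈ SA.domain := by
        rw [e]; exact SA.domain.sub_mem hm (hASA (hmemA _))
      refine ⟨hm2, ?_⟩
      have he : (⟨(T ^ (n + 1)) w, hm2⟩ : SA.domain)
          = ⟨(T ^ n) w - Rhalf (Rhalf ((T ^ n) w)),
              SA.domain.sub_mem hm (hASA (hmemA _))⟩ := Subtype.ext e
      rw [he, pmap_sub_val SA hm (hASA (hmemA _)), hval, comm ((T ^ n) w) hm, hval,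
        ← hT ((T ^ n) (SA ⟨w, hw⟩ : H)), ← hTpowS n]
  -- first goal
  have goal1 : SA.domain ≤ SB.domain := by
    intro f hf
    set xs : ℕ → H := fun n => f - (T ^ n) f with hxs
    have memx : ∀ n, xs n ∈ A.domain := fun n => (happrox f n).choose
    have hsaval : ∀ n, (SA ⟨xs n, hASA (memx n)⟩ : H)
        = (SA ⟨f, hf⟩ : H) - (T ^ n) (SA ⟨f, hf⟩ : H) := by
      intro n
      obtain ⟨hm, hval⟩ := hTSA f hf n
      have he : (⟨xs n, hASA (memx n)⟩ : SA.domain)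
          = ⟨f - (T ^ n) f, SA.domain.sub_mem hf hm⟩ := Subtype.ext rfl
      rw [he, pmap_sub_val SA hf hm, hval]
    have sdiff : ∀ n m,
        ‖(SB ⟨xs n, hASB (memx n)⟩ : H) - (SB ⟨xs m, hASB (memx m)⟩ : H)‖ ^ 2
          ≤ c * (‖(T ^ n) (SA ⟨f, hf⟩ : H) - (T ^ m) (SA ⟨f, hf⟩ : H)‖ ^ 2
                + ‖(T ^ n) f - (T ^ m) f‖ ^ 2) := by
      intro n m
      have hdm : xs n - xs m ∈ A.domain := A.domain.sub_mem (memx n) (memx m)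
      have h1 := starTot (xs n - xs m) hdm
      rw [pmap_sub_val SB (hASB (memx n)) (hASB (memx m))] at h1
      have h2 : (SA ⟨xs n - xs m, hASA hdm⟩ : H)
          = (T ^ m) (SA ⟨f, hf⟩ : H) - (T ^ n) (SA ⟨f, hf⟩ : H) := by
        rw [pmap_sub_val SA (hASA (memx n)) (hASA (memx m)), hsaval n, hsaval m]
        abel
      have h3 : xs n - xs m = (T ^ m) f - (T ^ n) f := by
        rw [hxs]
        simp only []
        abel
      rw [h2, h3] at h1
      rw [norm_sub_rev ((T ^ m) (SA ⟨f, hf⟩ : H)), norm_sub_rev ((T ^ m) f)] at h1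
      exact h1
    have hvc : CauchySeq (fun n => (T ^ n) (SA ⟨f, hf⟩ : H)) := (Ttend _).cauchySeq
    have hwc : CauchySeq (fun n => (T ^ n) f) := (Ttend f).cauchySeq
    have hcau : CauchySeq (fun n => (SB ⟨xs n, hASB (memx n)⟩ : H)) :=
      aux_cauchy c hc hvc hwc sdiff
    obtain ⟨y, hy⟩ := cauchySeq_tendsto_of_complete hcau
    have hxs_tend : Tendsto xs atTop (nhds f) := by
      simpa [hxs] using tendsto_const_nhds.sub (Ttend f)
    obtain ⟨hmem, -⟩ := pmap_closed_limit hSB.selfadj (fun n => hASB (memx n)) hxs_tend hy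
    exact hmem
  exact ⟨goal1, goal2⟩
end

section
/- Let A ≥ 0 be self-adjoint and B densely defined closed with dom(B) ∩ dom(B*) ⊇ dom(A), and let a,b (resp. a*,b*) be relative bounds for B (resp. B*) with respect to A. Then the operator (A + I)^{-1/2} B (A + I)^{-1/2} is bounded on its domain with closure of norm at most (a* + b*)^{1/2}(a + b)^{1/2}. -/
private def altRec {α : Sort*} (z0 : α) (s : ℕ → α → α) : ℕ → α :=
  fun n => Nat.rec z0 s n

private lemma aux_chain (c : ℕ → ℝ) (hc : ∀ n, 0 ≤ c n)
    (hlc : ∀ n, c (n + 1) ^ 2 ≤ c n * c (n + 2)) :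
    ∀ n, c 1 ^ (n + 1) ≤ c 0 ^ n * c (n + 1) := by
  have T : ∀ n, c 1 * c n ≤ c 0 * c (n + 1) := by
    intro n
    induction n with
    | zero => rw [mul_comm]
    | succ n ih =>
      rcases eq_or_lt_of_le (hc (n + 1)) with h0 | h0
      · rw [← h0, mul_zero]
        exact mul_nonneg (hc 0) (hc (n + 2))
      · have h1 : (c 1 * c (n + 1)) * c (n + 1) ≤ (c 0 * c (n + 2)) * c (n + 1) := by
          calc (c 1 * c (n + 1)) * c (n + 1) = c 1 * c (n + 1) ^ 2 := by ring
          _ ≤ c 1 * (c n * c (n + 2)) := mul_le_mul_of_nonneg_left (hlc n) (hc 1)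
          _ = (c 1 * c n) * c (n + 2) := by ring
          _ ≤ (c 0 * c (n + 1)) * c (n + 2) := mul_le_mul_of_nonneg_right ih (hc (n + 2))
          _ = (c 0 * c (n + 2)) * c (n + 1) := by ring
        exact le_of_mul_le_mul_right h1 h0
  intro n
  induction n with
  | zero => simpa using le_refl (c 1)
  | succ n ih =>
    calc c 1 ^ (n + 2) = c 1 ^ (n + 1) * c 1 := by ring
    _ ≤ (c 0 ^ n * c (n + 1)) * c 1 := mul_le_mul_of_nonneg_right ih (hc 1)
    _ = c 0 ^ n * (c 1 * c (n + 1)) := by ring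
    _ ≤ c 0 ^ n * (c 0 * c (n + 2)) := mul_le_mul_of_nonneg_left (T (n + 1)) (pow_nonneg (hc 0) n)
    _ = c 0 ^ (n + 1) * c (n + 2) := by ring

private lemma aux_limit (p q D : ℝ) (hp : 0 ≤ p) (hq : 0 ≤ q)
    (hk : ∀ k : ℕ, p ^ (2 * k + 1) ≤ q ^ (2 * k) * D) : p ≤ q := by
  by_contra hcon
  push_neg at hcon
  have hppos : 0 < p := lt_of_le_of_lt hq hcon
  rcases eq_or_lt_of_le hq with h0 | h0
  · have h1 := hk 1
    rw [← h0] at h1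
    norm_num at h1
    nlinarith [pow_pos hppos 3]
  · have hr : 1 < p / q := (one_lt_div h0).2 hcon
    have hDq : ∀ k : ℕ, (p / q) ^ (2 * k + 1) ≤ D / q := by
      intro k
      rw [div_pow, div_le_div_iff₀ (pow_pos h0 _) h0]
      calc p ^ (2 * k + 1) * q ≤ (q ^ (2 * k) * D) * q :=
        mul_le_mul_of_nonneg_right (hk k) hq
      _ = D * q ^ (2 * k + 1) := by ring
    obtain ⟨n, hn⟩ := pow_unbounded_of_one_lt (D / q) hr
    have h1 : (p / q) ^ n ≤ (p / q) ^ (2 * n + 1) := pow_le_pow_right₀ hr.le (by omega)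
    exact absurd (le_trans h1 (hDq n)) (not_le.2 hn)


/-- Let `A ≥ 0` be self-adjoint and `B` densely defined closed with
`dom B ∩ dom B* ⊇ dom A`, and let `a, b` (resp. `a*, b*`) be relative bounds for `B`
(resp. `B*`) with respect to `A`.  Then the operator `(A + I)^{-1/2} B (A + I)^{-1/2}` is
bounded on its (natural) domain, with closure of norm at most
`(a* + b*)^{1/2} (a + b)^{1/2}`.  Here `Rhalf` denotes `(A + I)^{-1/2}`. -/
theorem sandwiched_operator_bounded
    {H : Type*} [NormedAddCommGroup H] [InnerProductSpace ℂ H] [CompleteSpace H]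
    (A : H →ₗ.[ℂ] H) (hAsa : IsSelfAdjoint A)
    (hAnn : ∀ (f : H) (hf : f ∈ A.domain), 0 ≤ (inner ℂ f (A ⟨f, hf⟩) : ℂ).re)
    (B : H →ₗ.[ℂ] H) (hBdense : Dense (B.domain : Set H)) (hBclosed : B.IsClosed)
    (hdom : A.domain ≤ B.domain) (hdom' : A.domain ≤ B.adjoint.domain)
    (a b astar bstar : ℝ) (ha : 0 ≤ a) (hb : 0 ≤ b) (ha' : 0 ≤ astar) (hb' : 0 ≤ bstar)
    (hbound : ∀ (f : H) (hf : f ∈ A.domain),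
      ‖B ⟨f, hdom hf⟩‖ ≤ a * ‖A ⟨f, hf⟩‖ + b * ‖f‖)
    (hbound' : ∀ (f : H) (hf : f ∈ A.domain),
      ‖B.adjoint ⟨f, hdom' hf⟩‖ ≤ astar * ‖A ⟨f, hf⟩‖ + bstar * ‖f‖)
    (Rhalf : H →L[ℂ] H) (hRsa : IsSelfAdjoint Rhalf)
    (hRnn : ∀ g : H, 0 ≤ (inner ℂ g (Rhalf g) : ℂ).re)
    (hRsq : ∀ g : H, ∃ h : Rhalf (Rhalf g) ∈ A.domain,
      A ⟨Rhalf (Rhalf g), h⟩ + Rhalf (Rhalf g) = g)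
    (hRinv : ∀ (f : H) (hf : f ∈ A.domain), Rhalf (Rhalf (A ⟨f, hf⟩ + f)) = f) :
    ∀ (g : H) (h : Rhalf g ∈ B.domain),
      ‖Rhalf (B ⟨Rhalf g, h⟩)‖ ≤ Real.sqrt (astar + bstar) * Real.sqrt (a + b) * ‖g‖ := by
  intro g hg
  classical
  -- swap lemma for Rhalf
  have hRswap : ∀ x y : H, (inner ℂ (Rhalf x) y : ℂ) = inner ℂ x (Rhalf y) := by
    intro x y
    conv_lhs => rw [← ContinuousLinearMap.isSelfAdjoint_iff'.mp hRsa]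
    exact ContinuousLinearMap.adjoint_inner_left Rhalf y x
  have mem : ∀ x : H, Rhalf (Rhalf x) ∈ A.domain := fun x => (hRsq x).choose
  have spec : ∀ x : H, A ⟨Rhalf (Rhalf x), mem x⟩ + Rhalf (Rhalf x) = x :=
    fun x => (hRsq x).choose_spec
  have hAw : ∀ (w : H) (hw : w ∈ A.domain),
      ‖A ⟨w, hw⟩‖ ≤ ‖A ⟨w, hw⟩ + w‖ ∧ ‖w‖ ≤ ‖A ⟨w, hw⟩ + w‖ := by
    intro w hw
    have hre : 0 ≤ (inner ℂ (A ⟨w, hw⟩) w : ℂ).re := by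
      rw [← inner_conj_symm (A ⟨w, hw⟩) w, Complex.conj_re]
      exact hAnn w hw
    have hsq : ‖A ⟨w, hw⟩ + w‖ ^ 2
        = ‖A ⟨w, hw⟩‖ ^ 2 + 2 * (inner ℂ (A ⟨w, hw⟩) w : ℂ).re + ‖w‖ ^ 2 := by
      have h2 := @norm_add_sq ℂ H _ _ _ (A ⟨w, hw⟩) w
      simpa [RCLike.re_eq_complex_re] using h2
    constructor
    · apply le_of_pow_le_pow_left₀ two_ne_zero (norm_nonneg _)
      nlinarith [norm_nonneg w, norm_nonneg (A ⟨w, hw⟩)]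
    · apply le_of_pow_le_pow_left₀ two_ne_zero (norm_nonneg _)
      nlinarith [norm_nonneg w, norm_nonneg (A ⟨w, hw⟩)]
  have hRR : ∀ x : H, ‖Rhalf (Rhalf x)‖ ≤ ‖x‖ := by
    intro x
    have h2 := (hAw _ (mem x)).2
    rwa [spec x] at h2
  have hsqre : ∀ y : H, ‖Rhalf y‖ ^ 2 = (inner ℂ y (Rhalf (Rhalf y)) : ℂ).re := by
    intro y
    rw [← hRswap]
    have := inner_self_eq_norm_sq (𝕜 := ℂ) (Rhalf y)
    rw [← this]
    simp [RCLike.re_eq_complex_re]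
  have hcontr : ∀ x : H, ‖Rhalf x‖ ≤ ‖x‖ := by
    intro x
    have h1 : ‖Rhalf x‖ ^ 2 ≤ ‖x‖ ^ 2 := by
      rw [hsqre x]
      calc (inner ℂ x (Rhalf (Rhalf x)) : ℂ).re ≤ ‖x‖ * ‖Rhalf (Rhalf x)‖ := by
            have := re_inner_le_norm (𝕜 := ℂ) x (Rhalf (Rhalf x))
            simpa [RCLike.re_eq_complex_re] using this
      _ ≤ ‖x‖ * ‖x‖ := mul_le_mul_of_nonneg_left (hRR x) (norm_nonneg x)
      _ = ‖x‖ ^ 2 := by ring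
    exact le_of_pow_le_pow_left₀ two_ne_zero (norm_nonneg _) h1
  -- formal adjoint property
  have hadj : ∀ (u : B.adjoint.domain) (v : B.domain),
      (inner ℂ (B.adjoint u) (v : H) : ℂ) = inner ℂ (u : H) (B v) :=
    LinearPMap.adjoint_isFormalAdjoint hBdense
  -- the sequences
  set f : B.domain := (⟨Rhalf g, hg⟩ : B.domain) with hfdef
  let op : ℕ → A.domain → H := fun n w =>
    if Even n then B.adjoint ⟨(w : H), hdom' w.2⟩ else B ⟨(w : H), hdom w.2⟩
  let z : ℕ → A.domain := altRec ⟨Rhalf (Rhalf (B f)), mem _⟩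
    (fun n w => ⟨Rhalf (Rhalf (op n w)), mem _⟩)
  let x : ℕ → H := fun n => match n with
    | 0 => g
    | 1 => Rhalf (B f)
    | (m + 2) => Rhalf (op m (z m))
  have hx2 : ∀ n, x (n + 2) = Rhalf (op n (z n)) := fun n => rfl
  have hzx : ∀ n, (z n : H) = Rhalf (x (n + 1)) := by
    intro n; cases n <;> rfl
  have hzR : ∀ n, (z (n + 1) : H) = Rhalf (Rhalf (op n (z n))) := fun n => rfl
  have hspec0 : A (z 0) + ((z 0 : H)) = B f := spec (B f)
  have hspecs : ∀ n, A (z (n + 1)) + ((z (n + 1) : H)) = op n (z n) :=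
    fun n => spec (op n (z n))
  -- bound on one application of op
  have hopb : ∀ n, ‖op n (z n)‖
      ≤ (if Even n then astar + bstar else a + b) * ‖A (z n) + (z n : H)‖ := by
    intro n
    obtain ⟨h1, h2⟩ := hAw ((z n : H)) (z n).2
    by_cases hn : Even n
    · rw [if_pos hn]
      have hb1 := hbound' ((z n : H)) (z n).2
      have heq : op n (z n) = B.adjoint ⟨((z n : H)), hdom' (z n).2⟩ := by
        simp only [op, if_pos hn]
      rw [heq]
      calc ‖B.adjoint ⟨((z n : H)), hdom' (z n).2⟩‖
          ≤ astar * ‖A (z n)‖ + bstar * ‖(z n : H)‖ := hb1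
      _ ≤ astar * ‖A (z n) + (z n : H)‖ + bstar * ‖A (z n) + (z n : H)‖ := by
          have := mul_le_mul_of_nonneg_left h1 ha'
          have := mul_le_mul_of_nonneg_left h2 hb'
          linarith [mul_le_mul_of_nonneg_left h1 ha', mul_le_mul_of_nonneg_left h2 hb']
      _ = (astar + bstar) * ‖A (z n) + (z n : H)‖ := by ring
    · rw [if_neg hn]
      have hb1 := hbound ((z n : H)) (z n).2
      have heq : op n (z n) = B ⟨((z n : H)), hdom (z n).2⟩ := by
        simp only [op, if_neg hn]
      rw [heq]
      calc ‖B ⟨((z n : H)), hdom (z n).2⟩‖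
          ≤ a * ‖A (z n)‖ + b * ‖(z n : H)‖ := hb1
      _ ≤ a * ‖A (z n) + (z n : H)‖ + b * ‖A (z n) + (z n : H)‖ := by
          linarith [mul_le_mul_of_nonneg_left h1 ha, mul_le_mul_of_nonneg_left h2 hb]
      _ = (a + b) * ‖A (z n) + (z n : H)‖ := by ring
  set D : ℝ := ‖B f‖ with hDdef
  set m : ℝ := (astar + bstar) * (a + b) with hmdef
  let d : ℕ → ℝ := fun n => ‖op n (z n)‖
  let c : ℕ → ℝ := fun n => ‖x n‖
  have hdnn : ∀ n, 0 ≤ d n := fun n => norm_nonneg _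
  have hcnn : ∀ n, 0 ≤ c n := fun n => norm_nonneg _
  have hDnn : 0 ≤ D := norm_nonneg _
  have hmnn : 0 ≤ m := mul_nonneg (by linarith) (by linarith)
  have hd0 : d 0 ≤ (astar + bstar) * D := by
    have h1 := hopb 0
    rw [hspec0, if_pos (Even.zero)] at h1
    exact h1
  have hdsucc : ∀ n, d (n + 1) ≤ (if Even (n + 1) then astar + bstar else a + b) * d n := by
    intro n
    have h1 := hopb (n + 1)
    rwa [hspecs n] at h1
  have hdeven : ∀ k, d (2 * k) ≤ (astar + bstar) * (m ^ k * D) := by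
    intro k
    induction k with
    | zero => simpa using hd0
    | succ k ih =>
      have e1 : 2 * (k + 1) = (2 * k + 1) + 1 := by ring
      rw [e1]
      have h1 := hdsucc (2 * k + 1)
      rw [if_pos (by simp [Nat.even_add_one, Nat.even_add_one, parity_simps])] at h1
      have h2 := hdsucc (2 * k)
      rw [if_neg (by simp [parity_simps])] at h2
      calc d ((2 * k + 1) + 1) ≤ (astar + bstar) * d (2 * k + 1) := h1
      _ ≤ (astar + bstar) * ((a + b) * d (2 * k)) := by
          have := mul_le_mul_of_nonneg_left h2 (by linarith : (0:ℝ) ≤ astar + bstar)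
          linarith
      _ ≤ (astar + bstar) * ((a + b) * ((astar + bstar) * (m ^ k * D))) := by
          have h3 : (a + b) * d (2 * k) ≤ (a + b) * ((astar + bstar) * (m ^ k * D)) :=
            mul_le_mul_of_nonneg_left ih (by linarith)
          exact mul_le_mul_of_nonneg_left h3 (by linarith)
      _ = (astar + bstar) * (m ^ (k + 1) * D) := by rw [hmdef]; ring
  have hcd : ∀ n, c (n + 2) ≤ d n := fun n => hcontr (op n (z n))
  have hc1 : c 1 ≤ D := hcontr (B f)
  have hcodd : ∀ k, c (2 * k + 1) ≤ m ^ k * D := by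
    intro k
    cases k with
    | zero => simpa using hc1
    | succ k =>
      have e1 : 2 * (k + 1) + 1 = (2 * k + 1) + 2 := by ring
      rw [e1]
      have h2 := hdsucc (2 * k)
      rw [if_neg (by simp [parity_simps])] at h2
      calc c ((2 * k + 1) + 2) ≤ d (2 * k + 1) := hcd _
      _ ≤ (a + b) * d (2 * k) := h2
      _ ≤ (a + b) * ((astar + bstar) * (m ^ k * D)) :=
          mul_le_mul_of_nonneg_left (hdeven k) (by linarith)
      _ = m ^ (k + 1) * D := by rw [hmdef]; ring
  -- log-convexity of the sequence c
  have hlc : ∀ n, c (n + 1) ^ 2 ≤ c n * c (n + 2) := by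
    intro n
    cases n with
    | zero =>
      have heq : op 0 (z 0) = B.adjoint ⟨((z 0 : H)), hdom' (z 0).2⟩ := by
        simp only [op, if_pos Even.zero]
      have hkey : (inner ℂ (B f) ((z 0 : H)) : ℂ) = inner ℂ g (x 2) := by
        have h1 := hadj ⟨((z 0 : H)), hdom' (z 0).2⟩ f
        have h2 : (inner ℂ (B f) ((z 0 : H)) : ℂ)
            = inner ℂ ((f : H)) (B.adjoint ⟨((z 0 : H)), hdom' (z 0).2⟩) := by
          calc (inner ℂ (B f) ((z 0 : H)) : ℂ)
              = (starRingEnd ℂ) (inner ℂ ((z 0 : H)) (B f) : ℂ) := (inner_conj_symm _ _).symm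
          _ = (starRingEnd ℂ) (inner ℂ (B.adjoint ⟨((z 0 : H)), hdom' (z 0).2⟩) ((f : H)) : ℂ) := by
                rw [h1]
          _ = inner ℂ ((f : H)) (B.adjoint ⟨((z 0 : H)), hdom' (z 0).2⟩) := inner_conj_symm _ _
        rw [h2]
        show (inner ℂ (Rhalf g) (B.adjoint ⟨((z 0 : H)), hdom' (z 0).2⟩) : ℂ) = _
        rw [hRswap, hx2 0, heq]
      have h3 : c 1 ^ 2 = (inner ℂ (B f) ((z 0 : H)) : ℂ).re := by
        show ‖Rhalf (B f)‖ ^ 2 = _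
        rw [hsqre (B f)]
        rfl
      rw [h3, hkey]
      calc (inner ℂ g (x 2) : ℂ).re ≤ ‖g‖ * ‖x 2‖ := by
            have := re_inner_le_norm (𝕜 := ℂ) g (x 2)
            simpa [RCLike.re_eq_complex_re] using this
      _ = c 0 * c 2 := rfl
    | succ n =>
      have hkey : (inner ℂ (op n (z n)) ((z (n + 1) : H)) : ℂ)
          = inner ℂ ((z n : H)) (op (n + 1) (z (n + 1))) := by
        by_cases hn : Even n
        · have heq1 : op n (z n) = B.adjoint ⟨((z n : H)), hdom' (z n).2⟩ := by
            simp only [op, if_pos hn]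
          have hodd : ¬ Even (n + 1) := by simp [parity_simps, hn]
          have heq2 : op (n + 1) (z (n + 1)) = B ⟨((z (n + 1) : H)), hdom (z (n + 1)).2⟩ := by
            simp only [op, if_neg hodd]
          rw [heq1, heq2]
          exact hadj ⟨((z n : H)), hdom' (z n).2⟩ ⟨((z (n + 1) : H)), hdom (z (n + 1)).2⟩
        · have heq1 : op n (z n) = B ⟨((z n : H)), hdom (z n).2⟩ := by
            simp only [op, if_neg hn]
          have heq2 : op (n + 1) (z (n + 1))
              = B.adjoint ⟨((z (n + 1) : H)), hdom' (z (n + 1)).2⟩ := by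
            have hev : Even (n + 1) := by simp [parity_simps, hn]
            simp only [op, if_pos hev]
          rw [heq1, heq2]
          have h1 := hadj ⟨((z (n + 1) : H)), hdom' (z (n + 1)).2⟩ ⟨((z n : H)), hdom (z n).2⟩
          calc (inner ℂ (B ⟨((z n : H)), hdom (z n).2⟩) ((z (n + 1) : H)) : ℂ)
              = (starRingEnd ℂ) (inner ℂ ((z (n + 1) : H)) (B ⟨((z n : H)), hdom (z n).2⟩) : ℂ) :=
                (inner_conj_symm _ _).symm
          _ = (starRingEnd ℂ) (inner ℂ (B.adjoint ⟨((z (n + 1) : H)), hdom' (z (n + 1)).2⟩)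
                ((z n : H)) : ℂ) := by rw [h1]
          _ = inner ℂ ((z n : H)) (B.adjoint ⟨((z (n + 1) : H)), hdom' (z (n + 1)).2⟩) :=
                inner_conj_symm _ _
      have h3 : c (n + 2) ^ 2 = (inner ℂ (op n (z n)) ((z (n + 1) : H)) : ℂ).re := by
        show ‖Rhalf (op n (z n))‖ ^ 2 = _
        rw [hsqre (op n (z n))]
        rfl
      have h4 : (inner ℂ ((z n : H)) (op (n + 1) (z (n + 1))) : ℂ)
          = inner ℂ (x (n + 1)) (x (n + 3)) := by
        rw [hzx n, hRswap]
      rw [h3, hkey, h4]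
      calc (inner ℂ (x (n + 1)) (x (n + 3)) : ℂ).re ≤ ‖x (n + 1)‖ * ‖x (n + 3)‖ := by
            have := re_inner_le_norm (𝕜 := ℂ) (x (n + 1)) (x (n + 3))
            simpa [RCLike.re_eq_complex_re] using this
      _ = c (n + 1) * c (n + 3) := rfl
  -- combine everything
  set s : ℝ := Real.sqrt (astar + bstar) * Real.sqrt (a + b) with hsdef
  have hsnn : 0 ≤ s := mul_nonneg (Real.sqrt_nonneg _) (Real.sqrt_nonneg _)
  have hs2 : s ^ 2 = m := by
    rw [hsdef, hmdef, mul_pow, Real.sq_sqrt (by linarith), Real.sq_sqrt (by linarith)]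
  have hfin : ∀ k : ℕ, c 1 ^ (2 * k + 1) ≤ (s * c 0) ^ (2 * k) * D := by
    intro k
    calc c 1 ^ (2 * k + 1) ≤ c 0 ^ (2 * k) * c (2 * k + 1) := aux_chain c hcnn hlc (2 * k)
    _ ≤ c 0 ^ (2 * k) * (m ^ k * D) :=
        mul_le_mul_of_nonneg_left (hcodd k) (pow_nonneg (hcnn 0) _)
    _ = (s * c 0) ^ (2 * k) * D := by
        rw [mul_pow s (c 0), pow_mul s, hs2]; ring
  exact aux_limit (c 1) (s * c 0) D (hcnn 1) (mul_nonneg hsnn (hcnn 0)) hfin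
end

section
/- If A is m-accretive then ker(A) = ker(A*) and ker(A) = ker(A^α) for all α ∈ (0,1]. -/
/-- An operator `A` in a complex Hilbert space is *accretive* if its numerical range lies in
the closed right half-plane: `Re ⟨f, A f⟩ ≥ 0` for all `f ∈ dom A`. -/
def IsAccretive
    {H : Type*} [NormedAddCommGroup H] [InnerProductSpace ℂ H] [CompleteSpace H]
    (A : H →ₗ.[ℂ] H) : Prop :=
  ∀ (f : H) (hf : f ∈ A.domain), 0 ≤ (inner ℂ f (A ⟨f, hf⟩) : ℂ).re

/-- `A` is *m-accretive*: accretive, closed, and maximal accretive (no proper accretive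
extension). -/
def IsMAccretive
    {H : Type*} [NormedAddCommGroup H] [InnerProductSpace ℂ H] [CompleteSpace H]
    (A : H →ₗ.[ℂ] H) : Prop :=
  A.IsClosed ∧ IsAccretive A ∧ ∀ B : H →ₗ.[ℂ] H, IsAccretive B → A ≤ B → B = A

/-- `w` lies in the closed sector `|arg z| ≤ θ` of the right half-plane. -/
def InSector (θ : ℝ) (w : ℂ) : Prop :=
  0 ≤ w.re ∧ |w.im| ≤ Real.tan θ * w.re

/-- `A` is *m-sectorial with vertex 0* and some semi-angle `θ ∈ [0, π/2)`: `A` is m-accretive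
and its numerical range is contained in the sector `|arg z| ≤ θ`. -/
def IsMSectorial
    {H : Type*} [NormedAddCommGroup H] [InnerProductSpace ℂ H] [CompleteSpace H]
    (A : H →ₗ.[ℂ] H) : Prop :=
  IsMAccretive A ∧ ∃ θ : ℝ, 0 ≤ θ ∧ θ < Real.pi / 2 ∧
    ∀ (f : H) (hf : f ∈ A.domain), InSector θ (inner ℂ f (A ⟨f, hf⟩) : ℂ)

/-- `S` is a square root of `R`: `S ∘ S = R`, including equality of the natural domains. -/
def IsSqrtOf
    {H : Type*} [NormedAddCommGroup H] [InnerProductSpace ℂ H] [CompleteSpace H]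
    (S R : H →ₗ.[ℂ] H) : Prop :=
  (∀ f : H, f ∈ R.domain ↔ ∃ h : f ∈ S.domain, S ⟨f, h⟩ ∈ S.domain) ∧
  ∀ (f : H) (hR : f ∈ R.domain) (h : f ∈ S.domain) (h2 : S ⟨f, h⟩ ∈ S.domain),
    R ⟨f, hR⟩ = S ⟨S ⟨f, h⟩, h2⟩

/-- `P` is the family of fractional powers `α ↦ A^α` (for `α ∈ (0,1]`) of the m-accretive
operator `A`: `P 1 = A`, each `P α` is m-accretive with `dom A ⊆ dom (P α)`, and the family
has the semigroup property `A^{α+β} = A^α A^β` (with the correct natural domains). -/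
structure IsFracPowerFamily
    {H : Type*} [NormedAddCommGroup H] [InnerProductSpace ℂ H] [CompleteSpace H]
    (A : H →ₗ.[ℂ] H) (P : ℝ → H →ₗ.[ℂ] H) : Prop where
  one : P 1 = A
  maccretive : ∀ α : ℝ, 0 < α → α ≤ 1 → IsMAccretive (P α)
  dom_le : ∀ α : ℝ, 0 < α → α ≤ 1 → A.domain ≤ (P α).domain
  add_dom : ∀ α β : ℝ, 0 < α → 0 < β → α + β ≤ 1 → ∀ f : H,
    f ∈ (P (α + β)).domain ↔ ∃ h : f ∈ (P β).domain, P β ⟨f, h⟩ ∈ (P α).domain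
  add_eq : ∀ α β : ℝ, 0 < α → 0 < β → α + β ≤ 1 → ∀ (f : H)
    (hs : f ∈ (P (α + β)).domain) (hβ : f ∈ (P β).domain)
    (hα : P β ⟨f, hβ⟩ ∈ (P α).domain),
    P (α + β) ⟨f, hs⟩ = P α ⟨P β ⟨f, hβ⟩, hα⟩

section Aux

open LinearPMap

lemma quad_aux (a b : ℝ) (hb : 0 ≤ b) (h : ∀ t : ℝ, 0 ≤ t * a + t ^ 2 * b) : a = 0 := by
  by_contra ha
  have hb1 : (0:ℝ) < b + 1 := by linarith
  have ht := h (-(a / (b + 1)))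
  have key : -(a / (b + 1)) * a + (-(a / (b + 1))) ^ 2 * b = -(a ^ 2 / (b + 1) ^ 2) := by
    field_simp
    ring
  rw [key] at ht
  have h1 : a ^ 2 / (b+1)^2 ≤ 0 := by linarith
  have h3 : 0 < a ^ 2 / (b+1)^2 := by positivity
  linarith

variable {H : Type*} [NormedAddCommGroup H] [InnerProductSpace ℂ H] [CompleteSpace H]
  {A : H →ₗ.[ℂ] H}

lemma expand_re (hA : IsAccretive A) (u v : A.domain) (t : ℝ) :
    0 ≤ (inner ℂ (↑u) (A u) : ℂ).re
      + t * ((inner ℂ (↑u) (A v) : ℂ).re + (inner ℂ (↑v) (A u) : ℂ).re)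
      + t ^ 2 * (inner ℂ (↑v) (A v) : ℂ).re := by
  have h := hA ↑(u + (t:ℂ) • v) (u + (t:ℂ) • v).2
  have he : (⟨↑(u + (t:ℂ) • v), (u + (t:ℂ) • v).2⟩ : A.domain) = u + (t:ℂ) • v := rfl
  rw [he] at h
  rw [A.map_add, A.map_smul] at h
  push_cast at h
  simp only [inner_add_left, inner_add_right, inner_smul_left, inner_smul_right,
    Complex.add_re, Complex.mul_re, Complex.conj_re, Complex.conj_im, Complex.ofReal_re,
    Complex.ofReal_im, map_mul, Complex.mul_im] at h ⊢
  nlinarith [h]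

/-- If `A u = 0` then `⟪u, A v⟫ = 0` for all `v` in the domain. -/
lemma inner_left_eq_zero (hA : IsAccretive A) (u : A.domain) (hu : A u = 0)
    (v : A.domain) : (inner ℂ (↑u) (A v) : ℂ) = 0 := by
  have hre : ∀ w : A.domain, (inner ℂ (↑u) (A w) : ℂ).re = 0 := by
    intro w
    refine quad_aux _ _ (hA ↑w w.2) fun t => ?_
    have h := expand_re hA u w t
    rw [hu] at h
    simp only [inner_zero_right, Complex.zero_re, Subtype.coe_eta] at h ⊢
    convert h using 1
    ring
  have h1 := hre v
  have h2 := hre (Complex.I • v)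
  rw [A.map_smul, inner_smul_right] at h2
  have h2' : -(inner ℂ (↑u) (A v) : ℂ).im = 0 := by
    simpa [Complex.mul_re, Complex.I_re, Complex.I_im] using h2
  exact Complex.ext (by simpa using h1) (by simpa using h2')

/-- If `⟪u, A w⟫ = 0` for all `w`, then also `⟪v, A u⟫ = 0` for all `v`. -/
lemma inner_right_eq_zero (hA : IsAccretive A) (u : A.domain)
    (hu : ∀ w : A.domain, (inner ℂ (↑u) (A w) : ℂ) = 0)
    (v : A.domain) : (inner ℂ (↑v) (A u) : ℂ) = 0 := by
  have hre : ∀ w : A.domain, (inner ℂ (↑w) (A u) : ℂ).re = 0 := by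
    intro w
    refine quad_aux _ _ (hA ↑w w.2) fun t => ?_
    have h := expand_re hA u w t
    rw [hu u, hu w] at h
    simpa [Subtype.coe_eta] using h
  have h1 := hre v
  have h2 := hre (Complex.I • v)
  rw [Submodule.coe_smul, inner_smul_left] at h2
  have h2' : (inner ℂ (↑v) (A u) : ℂ).im = 0 := by
    simpa [Complex.mul_re, Complex.I_re, Complex.I_im] using h2
  exact Complex.ext (by simpa using h1) h2'

lemma mem_ker_adjoint_of_ker (hdense : Dense (A.domain : Set H)) (hacc : IsAccretive A)
    (f : H) (hf : f ∈ A.domain) (h0 : A ⟨f, hf⟩ = 0) :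
    ∃ h : f ∈ A.adjoint.domain, A.adjoint ⟨f, h⟩ = 0 := by
  have horth : ∀ v : A.domain, (inner ℂ f (A v) : ℂ) = 0 :=
    inner_left_eq_zero hacc ⟨f, hf⟩ h0
  have hmem : f ∈ A.adjoint.domain :=
    mem_adjoint_domain_of_exists f ⟨0, fun x => by simp [horth x]⟩
  exact ⟨hmem, adjoint_apply_eq hdense _ (fun x => by simp [horth x])⟩

lemma mem_ker_of_ker_adjoint (hdense : Dense (A.domain : Set H)) (hA : IsMAccretive A)
    (f : H) (hf : f ∈ A.adjoint.domain) (h0 : A.adjoint ⟨f, hf⟩ = 0) :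
    ∃ h : f ∈ A.domain, A ⟨f, h⟩ = 0 := by
  have horth : ∀ v : A.domain, (inner ℂ f (A v) : ℂ) = 0 := fun v => by
    have h := adjoint_isFormalAdjoint hdense ⟨f, hf⟩ v
    rw [h0] at h
    simpa using h.symm
  have hfd : f ∈ A.domain := by
    by_contra hfd
    set B := A.supSpanSingleton f 0 hfd with hB
    have hBacc : IsAccretive B := by
      intro g hg
      have hg' : g ∈ A.domain ⊔ ℂ ∙ f := hg
      obtain ⟨x, hx, z, hz, rfl⟩ := Submodule.mem_sup.1 hg'
      obtain ⟨c, rfl⟩ := Submodule.mem_span_singleton.1 hz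
      have hval : B ⟨x + c • f, hg⟩ = A ⟨x, hx⟩ + c • 0 :=
        A.supSpanSingleton_apply_mk f 0 hfd x hx c
      rw [hval]
      have heq : (inner ℂ (x + c • f) (A ⟨x, hx⟩ + c • (0:H)) : ℂ)
          = inner ℂ x (A ⟨x, hx⟩) := by
        rw [smul_zero, add_zero, inner_add_left, inner_smul_left, horth ⟨x, hx⟩,
          mul_zero, add_zero]
      rw [heq]
      exact hA.2.1 x hx
    have hle : A ≤ B := A.left_le_sup _ _
    have hBA := hA.2.2 B hBacc hle
    have hfB : f ∈ B.domain :=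
      Submodule.mem_sup_right (Submodule.mem_span_singleton_self f)
    rw [hBA] at hfB
    exact hfd hfB
  have h2 := inner_right_eq_zero hA.2.1 ⟨f, hfd⟩ horth
  exact ⟨hfd, hdense.eq_zero_of_inner_right ℂ (fun v hv => h2 ⟨v, hv⟩)⟩

lemma PMap_congr {A B : H →ₗ.[ℂ] H} (h : A = B) (f : H) (ha : f ∈ A.domain) :
    ∃ hb : f ∈ B.domain, B ⟨f, hb⟩ = A ⟨f, ha⟩ := by
  subst h; exact ⟨ha, rfl⟩

lemma P_congr (P : ℝ → H →ₗ.[ℂ] H) {a b : ℝ} (h : a = b) (f : H) (ha : f ∈ (P a).domain) :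
    ∃ hb : f ∈ (P b).domain, P b ⟨f, hb⟩ = P a ⟨f, ha⟩ := by
  subst h; exact ⟨ha, rfl⟩

lemma ker_mono {P : ℝ → H →ₗ.[ℂ] H} (hP : IsFracPowerFamily A P) {α γ : ℝ}
    (hα : 0 < α) (hγ : 0 < γ) (h1 : γ + α ≤ 1) (f : H)
    (hf : f ∈ (P α).domain) (h0 : P α ⟨f, hf⟩ = 0) :
    ∃ hg : f ∈ (P (γ + α)).domain, P (γ + α) ⟨f, hg⟩ = 0 := by
  have hmem0 : P α ⟨f, hf⟩ ∈ (P γ).domain := by rw [h0]; exact zero_mem _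
  have hg : f ∈ (P (γ + α)).domain := (hP.add_dom γ α hγ hα h1 f).2 ⟨hf, hmem0⟩
  refine ⟨hg, ?_⟩
  rw [hP.add_eq γ α hγ hα h1 f hg hf hmem0]
  have hz : (⟨P α ⟨f, hf⟩, hmem0⟩ : (P γ).domain) = 0 := Subtype.ext (by simp [h0])
  rw [hz]
  exact (P γ).map_zero

lemma ker_half {P : ℝ → H →ₗ.[ℂ] H} (hP : IsFracPowerFamily A P) {β : ℝ}
    (hβ : 0 < β) (hβ1 : β ≤ 1) (f : H) (hf : f ∈ (P β).domain)
    (h0 : P β ⟨f, hf⟩ = 0) :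
    ∃ hg : f ∈ (P (β/2)).domain, P (β/2) ⟨f, hg⟩ = 0 := by
  have h2 : 0 < β/2 := by linarith
  have hsum : β = β/2 + β/2 := by ring
  obtain ⟨hf', hv⟩ := P_congr P hsum f hf
  obtain ⟨h1, hmem⟩ := (hP.add_dom (β/2) (β/2) h2 h2 (by linarith) f).1 hf'
  have heq := hP.add_eq (β/2) (β/2) h2 h2 (by linarith) f hf' h1 hmem
  have hker : P (β/2) ⟨P (β/2) ⟨f, h1⟩, hmem⟩ = 0 := by rw [← heq, hv, h0]
  have hacc := (hP.maccretive (β/2) h2 (by linarith)).2.1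
  have hz := inner_left_eq_zero hacc ⟨P (β/2) ⟨f, h1⟩, hmem⟩ hker ⟨f, h1⟩
  have hfin : P (β/2) ⟨f, h1⟩ = 0 := by rwa [inner_self_eq_zero] at hz
  exact ⟨h1, hfin⟩

lemma ker_dyadic {P : ℝ → H →ₗ.[ℂ] H} (hP : IsFracPowerFamily A P) (f : H)
    (hf : f ∈ (P 1).domain) (h0 : P 1 ⟨f, hf⟩ = 0) (n : ℕ) :
    ∃ h : f ∈ (P ((1/2:ℝ)^n)).domain, P ((1/2:ℝ)^n) ⟨f, h⟩ = 0 := by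
  induction n with
  | zero =>
    obtain ⟨h, hv⟩ := P_congr P (show (1:ℝ) = (1/2:ℝ)^0 by norm_num) f hf
    exact ⟨h, by rw [hv, h0]⟩
  | succ n ih =>
    obtain ⟨h, hv⟩ := ih
    have hpos : (0:ℝ) < (1/2:ℝ)^n := by positivity
    have hle : ((1/2:ℝ))^n ≤ 1 := pow_le_one₀ (by norm_num) (by norm_num)
    obtain ⟨h', hv'⟩ := ker_half hP hpos hle f h hv
    obtain ⟨h'', hv''⟩ := P_congr P (show (1/2:ℝ)^n/2 = (1/2:ℝ)^(n+1) by ring) f h'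
    exact ⟨h'', by rw [hv'', hv']⟩

end Aux

/-- If `A` is m-accretive then `ker A = ker A*` and `ker A = ker A^α` for
all `α ∈ (0,1]`. -/
theorem kernel_of_m_accretive
    {H : Type*} [NormedAddCommGroup H] [InnerProductSpace ℂ H] [CompleteSpace H]
    (A : H →ₗ.[ℂ] H) (hdense : Dense (A.domain : Set H)) (hA : IsMAccretive A)
    (P : ℝ → H →ₗ.[ℂ] H) (hP : IsFracPowerFamily A P) :
    ({f : H | ∃ h : f ∈ A.domain, A ⟨f, h⟩ = 0} =
      {f : H | ∃ h : f ∈ A.adjoint.domain, A.adjoint ⟨f, h⟩ = 0}) ∧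
    ∀ α : ℝ, 0 < α → α ≤ 1 →
      {f : H | ∃ h : f ∈ (P α).domain, P α ⟨f, h⟩ = 0} =
        {f : H | ∃ h : f ∈ A.domain, A ⟨f, h⟩ = 0} := by
  constructor
  · ext f
    simp only [Set.mem_setOf_eq]
    constructor
    · rintro ⟨h, h0⟩
      exact mem_ker_adjoint_of_ker hdense hA.2.1 f h h0
    · rintro ⟨h, h0⟩
      exact mem_ker_of_ker_adjoint hdense hA f h h0
  · intro α hα hα1
    ext f
    simp only [Set.mem_setOf_eq]
    constructor
    · rintro ⟨h, h0⟩
      rcases lt_or_eq_of_le hα1 with h1 | h1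
      · obtain ⟨hg, hv⟩ := ker_mono hP hα (show 0 < 1 - α by linarith) (by linarith) f h h0
        obtain ⟨hg', hv'⟩ := P_congr P (show (1-α)+α = 1 by ring) f hg
        obtain ⟨hb, hvb⟩ := PMap_congr hP.one f hg'
        exact ⟨hb, by rw [hvb, hv', hv]⟩
      · obtain ⟨hg', hv'⟩ := P_congr P h1 f h
        obtain ⟨hb, hvb⟩ := PMap_congr hP.one f hg'
        exact ⟨hb, by rw [hvb, hv', h0]⟩
    · rintro ⟨h, h0⟩
      obtain ⟨h1, hv1⟩ := PMap_congr hP.one.symm f h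
      have hk1 : P 1 ⟨f, h1⟩ = 0 := by rw [hv1, h0]
      obtain ⟨n, hn⟩ := exists_pow_lt_of_lt_one hα (show (1/2:ℝ) < 1 by norm_num)
      obtain ⟨h2, hv2⟩ := ker_dyadic hP f h1 hk1 n
      have hpos : (0:ℝ) < (1/2:ℝ)^n := by positivity
      obtain ⟨h3, hv3⟩ := ker_mono hP hpos (show 0 < α - (1/2:ℝ)^n by linarith)
        (by linarith) f h2 hv2
      obtain ⟨h4, hv4⟩ := P_congr P (show (α - (1/2:ℝ)^n) + (1/2:ℝ)^n = α by ring) f h3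
      exact ⟨h4, by rw [hv4, hv3]⟩
end

section
/- For any m-accretive operator S in H and z ∈ ℂ with Re(z) ∈ (0,1), the fractional power satisfies ‖(S + I)^{-z}‖ ≤ |sin(πz)| / sin(π Re(z)), using the integral representation (S+I)^{-z} = (sin(πz)/π) ∫₀^∞ t^{-z} (S + (t+1)I)^{-1} dt. -/
open MeasureTheory

section Helpers
open Set Real
lemma meas_aux (a : ℝ) : Measurable (fun t : ℝ => t ^ (-a) / (t + 1)) := by
  fun_prop

lemma integrable_aux {a : ℝ} (h0 : 0 < a) (h1 : a < 1) :
    IntegrableOn (fun t : ℝ => t ^ (-a) / (t + 1)) (Set.Ioi 0) := by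
  have hmeas : AEStronglyMeasurable (fun t : ℝ => t ^ (-a) / (t + 1)) :=
    (meas_aux a).aestronglyMeasurable
  rw [← Set.Ioc_union_Ioi_eq_Ioi (zero_le_one (α := ℝ))]
  apply IntegrableOn.union
  · have hb : IntegrableOn (fun t : ℝ => t ^ (-a)) (Set.Ioc (0:ℝ) 1) := by
      have := intervalIntegral.intervalIntegrable_rpow' (a := 0) (b := 1) (show (-1:ℝ) < -a by linarith)
      rwa [intervalIntegrable_iff, Set.uIoc_of_le zero_le_one] at this
    apply hb.mono' hmeas.restrict
    filter_upwards [ae_restrict_mem measurableSet_Ioc] with t ht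
    rw [Real.norm_eq_abs]
    rw [abs_div, abs_of_nonneg (Real.rpow_nonneg (le_of_lt ht.1) _),
      abs_of_pos (by linarith [ht.1] : (0:ℝ) < t + 1)]
    calc t ^ (-a) / (t + 1) ≤ t ^ (-a) / 1 := by
          apply div_le_div_of_nonneg_left (Real.rpow_nonneg (le_of_lt ht.1) _) one_pos
          linarith [ht.1]
      _ = t ^ (-a) := div_one _
  · have hb : IntegrableOn (fun t : ℝ => t ^ (-a - 1)) (Set.Ioi (1:ℝ)) :=
      integrableOn_Ioi_rpow_of_lt (by linarith) one_pos
    apply hb.mono' hmeas.restrict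
    filter_upwards [ae_restrict_mem measurableSet_Ioi] with t ht
    have ht0 : (0:ℝ) < t := lt_trans one_pos ht
    rw [Real.norm_eq_abs, abs_div, abs_of_nonneg (Real.rpow_nonneg ht0.le _),
      abs_of_pos (by linarith : (0:ℝ) < t + 1)]
    calc t ^ (-a) / (t + 1) ≤ t ^ (-a) / t :=
          div_le_div_of_nonneg_left (Real.rpow_nonneg ht0.le _) ht0 (by linarith)
      _ = t ^ (-a) * t ^ (-1 : ℝ) := by rw [Real.rpow_neg_one]; ring
      _ = t ^ (-a - 1) := by rw [← Real.rpow_add ht0]; ring_nf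

lemma beta_part {a : ℝ} (h0 : 0 < a) (h1 : a < 1) :
    ∫ x in Set.Ioo (0:ℝ) 1, x ^ (-a) * (1 - x) ^ (a - 1) =
      Real.pi / Real.sin (Real.pi * a) := by
  have hJ : ((∫ x in (0:ℝ)..1, x ^ (-a) * (1 - x) ^ (a - 1) : ℝ) : ℂ) =
      Complex.betaIntegral ((1 - a : ℝ) : ℂ) ((a : ℝ) : ℂ) := by
    rw [← intervalIntegral.integral_ofReal, Complex.betaIntegral]
    apply intervalIntegral.integral_congr_ae
    filter_upwards with x hx
    rw [Set.uIoc_of_le zero_le_one] at hx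
    have hx0 : (0:ℝ) < x := hx.1
    have hx1 : (0:ℝ) ≤ 1 - x := by linarith [hx.2]
    push_cast
    rw [Complex.ofReal_cpow hx0.le, Complex.ofReal_cpow hx1]
    push_cast
    ring_nf
  have hB : Complex.betaIntegral ((1 - a : ℝ) : ℂ) ((a : ℝ) : ℂ) =
      ((Real.pi / Real.sin (Real.pi * a) : ℝ) : ℂ) := by
    have h1' : (0:ℝ) < 1 - a := by linarith
    have hgb := Complex.Gamma_mul_Gamma_eq_betaIntegral
      (s := ((1 - a : ℝ) : ℂ)) (t := ((a : ℝ) : ℂ))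
      (by simpa using h1') (by simpa using h0)
    have hsum : ((1 - a : ℝ) : ℂ) + ((a : ℝ) : ℂ) = 1 := by push_cast; ring
    rw [hsum, Complex.Gamma_one, one_mul] at hgb
    have hrefl := Complex.Gamma_mul_Gamma_one_sub ((a : ℝ) : ℂ)
    have h1a : (1 : ℂ) - ((a : ℝ) : ℂ) = ((1 - a : ℝ) : ℂ) := by push_cast; ring
    rw [h1a] at hrefl
    rw [← hgb, mul_comm, hrefl]
    have hsin : Complex.sin ((Real.pi : ℂ) * (a : ℂ)) =
        ((Real.sin (Real.pi * a) : ℝ) : ℂ) := by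
      rw [← Complex.ofReal_mul, Complex.ofReal_sin]
    rw [hsin, Complex.ofReal_div]
  have := hJ.trans hB
  have hJr : (∫ x in (0:ℝ)..1, x ^ (-a) * (1 - x) ^ (a - 1) : ℝ) =
      Real.pi / Real.sin (Real.pi * a) := by exact_mod_cast this
  rw [← hJr, intervalIntegral.integral_of_le zero_le_one,
    MeasureTheory.integral_Ioc_eq_integral_Ioo]

lemma key_integral {a : ℝ} (h0 : 0 < a) (h1 : a < 1) :
    ∫ t in Set.Ioi (0:ℝ), t ^ (-a) / (t + 1) = Real.pi / Real.sin (Real.pi * a) := by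
  have himg : (fun x : ℝ => x / (1 - x)) '' Set.Ioo 0 1 = Set.Ioi 0 := by
    ext t
    constructor
    · rintro ⟨x, hx, rfl⟩
      exact Set.mem_Ioi.2 (div_pos hx.1 (by linarith [hx.2]))
    · intro ht
      have ht0 : (0:ℝ) < t := ht
      refine ⟨t / (1 + t), ⟨div_pos ht0 (by linarith), ?_⟩, ?_⟩
      · rw [div_lt_one (by linarith)]; linarith
      · field_simp; ring
  have hderiv : ∀ x ∈ Set.Ioo (0:ℝ) 1,
      HasDerivWithinAt (fun x : ℝ => x / (1 - x)) (((1 - x) ^ 2)⁻¹) (Set.Ioo 0 1) x := by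
    intro x hx
    have hne : (1 - x) ≠ 0 := by intro h; have := hx.2; linarith [h]
    have := (HasDerivAt.div (hasDerivAt_id x) ((hasDerivAt_id x).const_sub 1) hne)
    refine this.hasDerivWithinAt.congr_deriv ?_
    simp only [id]
    ring
  have hinj : Set.InjOn (fun x : ℝ => x / (1 - x)) (Set.Ioo 0 1) := by
    intro x hx y hy h
    have hnx : (1 - x) ≠ 0 := by have := hx.2; intro h'; linarith
    have hny : (1 - y) ≠ 0 := by have := hy.2; intro h'; linarith
    field_simp at h
    linarith
  have := MeasureTheory.integral_image_eq_integral_abs_deriv_smul measurableSet_Ioo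
    hderiv hinj (fun t : ℝ => t ^ (-a) / (t + 1))
  rw [himg] at this
  rw [this, ← beta_part h0 h1]
  apply MeasureTheory.setIntegral_congr_fun measurableSet_Ioo
  intro x hx
  have hx0 : (0:ℝ) < x := hx.1
  have hu : (0:ℝ) < 1 - x := by linarith [hx.2]
  have hxu : x / (1 - x) + 1 = (1 - x)⁻¹ := by field_simp; ring
  have hpow : (x / (1 - x)) ^ (-a) = x ^ (-a) * (1 - x) ^ a := by
    rw [Real.div_rpow hx0.le hu.le, Real.rpow_neg hu.le, div_inv_eq_mul]
  simp only [smul_eq_mul]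
  rw [hxu, hpow, abs_of_pos (inv_pos.2 (pow_pos hu 2))]
  have hrw : (1 - x) ^ (a - 1) = (1 - x) ^ a * (1 - x)⁻¹ := by
    rw [Real.rpow_sub hu, Real.rpow_one, div_eq_mul_inv]
  rw [hrw, sq]
  field_simp

end Helpers

/-- For any m-accretive operator `S` in `H` and `z ∈ ℂ` with
`Re z ∈ (0,1)`, the complex fractional power, defined by the norm-convergent Bochner
integral `(S+I)^{-z} = (sin (π z) / π) ∫₀^∞ t^{-z} (S + (t+1) I)⁻¹ dt`, satisfies
`‖(S+I)^{-z}‖ ≤ |sin (π z)| / sin (π Re z)`.  Here `R t` denotes the bounded resolvent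
`(S + (t+1) I)⁻¹`, which satisfies `‖R t‖ ≤ 1/(t+1)`. -/
theorem fractional_power_norm_bound
    {H : Type*} [NormedAddCommGroup H] [InnerProductSpace ℂ H] [CompleteSpace H]
    (S : H →ₗ.[ℂ] H) (hdense : Dense (S.domain : Set H)) (hS : IsMAccretive S)
    (R : ℝ → H →L[ℂ] H)
    (hRl : ∀ t : ℝ, 0 ≤ t → ∀ (f : H) (hf : f ∈ S.domain),
      R t (S ⟨f, hf⟩ + (((t : ℂ) + 1)) • f) = f)
    (hRr : ∀ t : ℝ, 0 ≤ t → ∀ g : H,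
      ∃ h : R t g ∈ S.domain, S ⟨R t g, h⟩ + (((t : ℂ) + 1)) • R t g = g)
    (hRnorm : ∀ t : ℝ, 0 ≤ t → ‖R t‖ ≤ 1 / (t + 1))
    (z : ℂ) (hz : 0 < z.re) (hz' : z.re < 1)
    (F : H →L[ℂ] H)
    (hF : ∀ f : H, F f =
      (Complex.sin (Real.pi * z) / (Real.pi : ℂ)) •
        ∫ t in Set.Ioi (0 : ℝ), ((t : ℂ) ^ (-z)) • R t f) :
    ‖F‖ ≤ ‖Complex.sin (Real.pi * z)‖ / Real.sin (Real.pi * z.re) := by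
  set a := z.re with ha
  have hsin : 0 < Real.sin (Real.pi * a) :=
    Real.sin_pos_of_pos_of_lt_pi (by positivity)
      (by nlinarith [Real.pi_pos])
  apply ContinuousLinearMap.opNorm_le_bound _
    (div_nonneg (norm_nonneg _) hsin.le)
  intro f
  rw [hF f, norm_smul]
  have hc : ‖Complex.sin ((Real.pi : ℂ) * z) / (Real.pi : ℂ)‖ =
      ‖Complex.sin ((Real.pi : ℂ) * z)‖ / Real.pi := by
    rw [norm_div, Complex.norm_real, Real.norm_eq_abs, abs_of_pos Real.pi_pos]
  have h2 : ‖∫ t in Set.Ioi (0:ℝ), ((t : ℂ) ^ (-z)) • R t f‖ ≤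
      ∫ t in Set.Ioi (0:ℝ), t ^ (-a) / (t + 1) * ‖f‖ := by
    refine (norm_integral_le_integral_norm _).trans ?_
    apply integral_mono_of_nonneg
    · filter_upwards with t using norm_nonneg _
    · exact (integrable_aux hz hz').mul_const ‖f‖
    · filter_upwards [ae_restrict_mem measurableSet_Ioi] with t ht
      have ht0 : (0:ℝ) < t := ht
      rw [norm_smul]
      have hcp : ‖(t : ℂ) ^ (-z)‖ = t ^ (-a) := by
        rw [Complex.norm_cpow_eq_rpow_re_of_pos ht0]
        simp [ha]
      rw [hcp, div_mul_eq_mul_div, div_eq_mul_inv, mul_assoc]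
      apply mul_le_mul_of_nonneg_left _ (Real.rpow_nonneg ht0.le _)
      calc ‖(R t) f‖ ≤ ‖R t‖ * ‖f‖ := (R t).le_opNorm f
        _ ≤ (1 / (t + 1)) * ‖f‖ :=
            mul_le_mul_of_nonneg_right (hRnorm t ht0.le) (norm_nonneg f)
        _ = ‖f‖ * (t + 1)⁻¹ := by ring
  calc ‖Complex.sin ((Real.pi : ℂ) * z) / (Real.pi : ℂ)‖ *
        ‖∫ t in Set.Ioi (0:ℝ), ((t : ℂ) ^ (-z)) • R t f‖ ≤
      (‖Complex.sin ((Real.pi : ℂ) * z)‖ / Real.pi) *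
        ∫ t in Set.Ioi (0:ℝ), t ^ (-a) / (t + 1) * ‖f‖ := by
        rw [hc]
        exact mul_le_mul_of_nonneg_left h2 (by positivity)
    _ = (‖Complex.sin ((Real.pi : ℂ) * z)‖ / Real.pi) *
        ((Real.pi / Real.sin (Real.pi * a)) * ‖f‖) := by
        rw [integral_mul_const, key_integral hz hz']
    _ = ‖Complex.sin ((Real.pi : ℂ) * z)‖ / Real.sin (Real.pi * a) * ‖f‖ := by
        field_simp
end
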